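/- arXiv:2105.00887 — 7 statements merged into one kernel-verified Lean document; each statement's English description precedes it below -/
import Mathlib

section
/- Let f : [0,T] → V be a twice differentiable function into a normed space with ‖f'(s)‖ ≤ B₁ and ‖f''(s)‖ ≤ B₂ for all s ∈ [0,T]. Then for any h > 0 with T/h ∈ ℕ, the trapezoidal-type approximation satisfies ‖∫₀ᵀ (T−s) f(s) ds − (1/2) ∫₀ᵀ (T−s) [f(⌊s⌋) + f(⌈s⌉)] ds‖ ≤ (h²/12)(B₂ T² + B₁ T), where ⌊s⌋ = max{t ∈ hℤ : t ≤ s} and ⌈s⌉ = min{t ∈ hℤ : t ≥ s}. -/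
set_option maxHeartbeats 1000000

open MeasureTheory intervalIntegral

/-- Grid point below `t` on the grid `h·ℤ`. -/
noncomputable def gridFloor (h t : ℝ) : ℝ := h * ⌊t / h⌋

/-- Grid point above `t` on the grid `h·ℤ`. -/
noncomputable def gridCeil (h t : ℝ) : ℝ := h * ⌈t / h⌉

lemma int_phi (a b : ℝ) : (∫ s in a..b, (s - a) * (b - s) / 2) = (b - a)^3 / 12 := by
  have h : (fun s : ℝ => (s - a) * (b - s) / 2)
      = fun s : ℝ => ((a + b)/2) * s - (1/2) * s^2 - (a * b / 2) := by
    funext s; ring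
  have h1 : IntervalIntegrable (fun s : ℝ => ((a + b)/2) * s) volume a b :=
    (Continuous.intervalIntegrable (by continuity) a b)
  have h2 : IntervalIntegrable (fun s : ℝ => (1/2 : ℝ) * s^2) volume a b :=
    (Continuous.intervalIntegrable (by continuity) a b)
  have h3 : IntervalIntegrable (fun s : ℝ => (a * b / 2 : ℝ)) volume a b :=
    intervalIntegrable_const
  rw [h, intervalIntegral.integral_sub (h1.sub h2) h3, intervalIntegral.integral_sub h1 h2,
    intervalIntegral.integral_const_mul, intervalIntegral.integral_const_mul,
    integral_id, integral_pow, intervalIntegral.integral_const]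
  simp only [smul_eq_mul]
  ring

/-- Integration by parts building block. -/
lemma my_parts {V : Type*} [NormedAddCommGroup V] [NormedSpace ℝ V] [CompleteSpace V]
    (a b : ℝ) (u u' : ℝ → ℝ) (v v' : ℝ → V)
    (hu : ∀ x ∈ Set.uIcc a b, HasDerivAt u (u' x) x)
    (hv : ∀ x ∈ Set.uIcc a b, HasDerivAt v (v' x) x)
    (hint : IntervalIntegrable (fun s => u s • v' s + u' s • v s) volume a b) :
    (∫ s in a..b, (u s • v' s + u' s • v s)) = u b • v b - u a • v a := by
  apply intervalIntegral.integral_eq_sub_of_hasDerivAt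
  · intro x hx
    exact (hu x hx).smul (hv x hx)
  · exact hint

/-- Bound on the kernel-weighted integral. -/
lemma phi_bound {V : Type*} [NormedAddCommGroup V] [NormedSpace ℝ V]
    (a b C : ℝ) (hab : a ≤ b) (hC : 0 ≤ C) (g : ℝ → V)
    (hg : ∀ s ∈ Set.Icc a b, ‖g s‖ ≤ C) :
    ‖∫ s in a..b, ((s - a) * (b - s) / 2) • g s‖ ≤ C * (b - a)^3 / 12 := by
  have key : ‖∫ s in a..b, ((s - a) * (b - s) / 2) • g s‖
      ≤ |∫ s in a..b, ((s - a) * (b - s) / 2) * C| := by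
    refine le_trans (intervalIntegral.norm_integral_le_of_norm_le hab ?_ ?_) (le_abs_self _)
    · filter_upwards with s hs
      have h1 : (0:ℝ) ≤ (s - a) * (b - s) / 2 := by
        nlinarith [hs.1.le, hs.2]
      rw [norm_smul, Real.norm_eq_abs, abs_of_nonneg h1]
      exact mul_le_mul_of_nonneg_left (hg s ⟨hs.1.le, hs.2⟩) h1
    · exact Continuous.intervalIntegrable (by continuity) a b
  have heq : (∫ s in a..b, ((s - a) * (b - s) / 2) * C)
      = C * (b - a)^3 / 12 := by
    rw [intervalIntegral.integral_mul_const, int_phi]; ring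
  rw [heq] at key
  refine key.trans_eq (abs_of_nonneg ?_)
  have h3 : (0:ℝ) ≤ (b - a)^3 := pow_nonneg (sub_nonneg.2 hab) 3
  have := mul_nonneg hC h3
  linarith

/-- A continuous weight times an (everywhere-on-an-interval) derivative bounded by a constant
is interval integrable. -/
lemma deriv_integrable {V : Type*} [NormedAddCommGroup V] [NormedSpace ℝ V] [CompleteSpace V]
    (T B : ℝ) (g g' : ℝ → V)
    (hg : ∀ s ∈ Set.Icc (0:ℝ) T, HasDerivAt g (g' s) s)
    (hB : ∀ s ∈ Set.Icc (0:ℝ) T, ‖g' s‖ ≤ B)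
    (a b : ℝ) (hab : a ≤ b) (hsub : Set.Icc a b ⊆ Set.Icc (0:ℝ) T)
    (w : ℝ → ℝ) (hw : Continuous w) :
    IntervalIntegrable (fun s => w s • g' s) volume a b := by
  rw [intervalIntegrable_iff_integrableOn_Ioc_of_le hab]
  have hmem : ∀ s ∈ Set.Ioc a b, s ∈ Set.Icc (0:ℝ) T := fun s hs =>
    hsub ⟨hs.1.le, hs.2⟩
  have hae : (fun s => w s • g' s)
      =ᵐ[volume.restrict (Set.Ioc a b)] (fun s => w s • deriv g s) := by
    filter_upwards [MeasureTheory.ae_restrict_mem measurableSet_Ioc] with s hs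
    rw [(hg s (hmem s hs)).deriv]
  have hmeas : AEStronglyMeasurable (fun s => w s • g' s) (volume.restrict (Set.Ioc a b)) := by
    refine AEStronglyMeasurable.congr ?_ hae.symm
    exact (hw.aestronglyMeasurable.restrict).smul
      ((stronglyMeasurable_deriv g).aestronglyMeasurable.restrict)
  -- bound
  obtain ⟨C, hC⟩ : ∃ C, ∀ s ∈ Set.Icc a b, |w s| ≤ C := by
    obtain ⟨C, hC⟩ := (isCompact_Icc (a := a) (b := b)).exists_bound_of_continuousOn
      hw.continuousOn
    exact ⟨C, fun s hs => by simpa [Real.norm_eq_abs] using hC s hs⟩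
  apply MeasureTheory.Integrable.mono' (g := fun _ => C * B)
  · exact integrable_const _
  · exact hmeas
  · filter_upwards [MeasureTheory.ae_restrict_mem measurableSet_Ioc] with s hs
    rw [norm_smul, Real.norm_eq_abs]
    exact mul_le_mul (hC s ⟨hs.1.le, hs.2⟩) (hB s (hmem s hs)) (norm_nonneg _)
      ((abs_nonneg _).trans (hC s ⟨hs.1.le, hs.2⟩))

/-- Per-interval trapezoid error bound. -/
lemma key_interval {V : Type*} [NormedAddCommGroup V] [NormedSpace ℝ V] [CompleteSpace V]
    (T B₁ B₂ : ℝ) (f f' f'' : ℝ → V)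
    (hf : ∀ s ∈ Set.Icc (0:ℝ) T, HasDerivAt f (f' s) s)
    (hf' : ∀ s ∈ Set.Icc (0:ℝ) T, HasDerivAt f' (f'' s) s)
    (hB₁ : ∀ s ∈ Set.Icc (0:ℝ) T, ‖f' s‖ ≤ B₁)
    (hB₂ : ∀ s ∈ Set.Icc (0:ℝ) T, ‖f'' s‖ ≤ B₂)
    (a b : ℝ) (hab : a ≤ b) (hsub : Set.Icc a b ⊆ Set.Icc (0:ℝ) T) :
    ‖(∫ s in a..b, (T - s) • f s) -
        (1/2 : ℝ) • ∫ s in a..b, (T - s) • (f a + f b)‖ ≤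
      (T * B₂ + B₁) * (b - a)^3 / 12 := by
  set m : ℝ := (a + b) / 2 with hm
  set φ : ℝ → ℝ := fun s => (s - a) * (b - s) / 2 with hφ
  have huIcc : Set.uIcc a b = Set.Icc a b := Set.uIcc_of_le hab
  have hmem : ∀ x ∈ Set.uIcc a b, x ∈ Set.Icc (0:ℝ) T := fun x hx => hsub (huIcc ▸ hx)
  have ha0T : a ∈ Set.Icc (0:ℝ) T := hsub ⟨le_refl a, hab⟩
  have hb0T : b ∈ Set.Icc (0:ℝ) T := hsub ⟨hab, le_refl b⟩
  have hT0 : (0:ℝ) ≤ T := le_trans ha0T.1 ha0T.2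
  have hm0 : (0:ℝ) ≤ m := by rw [hm]; linarith [ha0T.1, hb0T.1]
  have hmT : m ≤ T := by rw [hm]; linarith [ha0T.2, hb0T.2]
  -- continuity
  have hfc : ContinuousOn f (Set.uIcc a b) := fun x hx =>
    (hf x (hmem x hx)).continuousAt.continuousWithinAt
  have hf'c : ContinuousOn f' (Set.uIcc a b) := fun x hx =>
    (hf' x (hmem x hx)).continuousAt.continuousWithinAt
  have hφc : Continuous φ := by rw [hφ]; continuity
  -- integrability
  have I6 : IntervalIntegrable f volume a b := hfc.intervalIntegrable
  have I2 : IntervalIntegrable (fun s => (m - s) • f s) volume a b :=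
    (((continuous_const.sub continuous_id).continuousOn).smul hfc).intervalIntegrable
  have I3 : IntervalIntegrable (fun s => φ s • f' s) volume a b :=
    ((hφc.continuousOn).smul hf'c).intervalIntegrable
  have I4 : IntervalIntegrable (fun s => (s - m) • f' s) volume a b :=
    (((continuous_id.sub continuous_const).continuousOn).smul hf'c).intervalIntegrable
  have I5 : IntervalIntegrable (fun s => φ s • f'' s) volume a b :=
    deriv_integrable T B₂ f' f'' hf' hB₂ a b hab hsub φ hφc
  have I6c : IntervalIntegrable (fun s => (T - m) • f s) volume a b := I6.smul (T - m)
  have I6o : IntervalIntegrable (fun s => (1:ℝ) • f s) volume a b := I6.smul (1:ℝ)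
  -- derivative of φ
  have hφd : ∀ x, HasDerivAt φ (m - x) x := by
    intro x
    have h1 : HasDerivAt (fun s : ℝ => (s - a) * (b - s) / 2)
        ((1 * (b - x) + (x - a) * (-1)) / 2) x := by
      exact (((hasDerivAt_id x).sub_const a).mul ((hasDerivAt_id x).const_sub b)).div_const 2
    convert h1 using 1
    rw [hm]; ring
  -- parts (II)
  have eq2 : (∫ s in a..b, (m - s) • f s) = -(∫ s in a..b, φ s • f' s) := by
    have h2 := my_parts a b φ (fun s => m - s) f f'
      (fun x _ => hφd x) (fun x hx => hf x (hmem x hx)) (I3.add I2)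
    rw [intervalIntegral.integral_add I3 I2] at h2
    have hφa : φ a = 0 := by rw [hφ]; ring
    have hφb : φ b = 0 := by rw [hφ]; ring
    rw [hφa, hφb, zero_smul, zero_smul, sub_zero] at h2
    rw [add_comm] at h2
    exact eq_neg_of_add_eq_zero_left h2
  -- parts (Ia)
  have eq1a : (∫ s in a..b, f s)
      = ((b - a)/2) • (f a + f b) - ∫ s in a..b, (s - m) • f' s := by
    have h1 := my_parts a b (fun s => s - m) (fun _ => (1:ℝ)) f f'
      (fun x _ => (hasDerivAt_id x).sub_const m) (fun x hx => hf x (hmem x hx)) (I4.add I6o)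
    rw [intervalIntegral.integral_add I4 I6o] at h1
    beta_reduce at h1
    have hone : (∫ s in a..b, (1:ℝ) • f s) = ∫ s in a..b, f s := by
      simp
    rw [hone] at h1
    have hbm : b - m = (b - a)/2 := by rw [hm]; ring
    have ham : a - m = -((b - a)/2) := by rw [hm]; ring
    rw [hbm, ham] at h1
    have hr : ((b - a)/2) • f b - (-((b - a)/2)) • f a = ((b - a)/2) • (f a + f b) := by
      rw [neg_smul, sub_neg_eq_add, smul_add]
      abel
    rw [hr] at h1
    exact eq_sub_of_add_eq' h1
  -- parts (Ib)
  have eq1b : (∫ s in a..b, (s - m) • f' s) = ∫ s in a..b, φ s • f'' s := by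
    have I5n : IntervalIntegrable (fun s => (-φ s) • f'' s) volume a b :=
      deriv_integrable T B₂ f' f'' hf' hB₂ a b hab hsub (fun s => -φ s) hφc.neg
    have h1 := my_parts a b (fun s => -φ s) (fun s => s - m) f' f''
      (fun x _ => by have := (hφd x).neg; rw [neg_sub] at this; exact this) (fun x hx => hf' x (hmem x hx))
      (I5n.add I4)
    rw [intervalIntegral.integral_add I5n I4] at h1
    beta_reduce at h1
    have hφa : φ a = 0 := by rw [hφ]; ring
    have hφb : φ b = 0 := by rw [hφ]; ring
    rw [hφa, hφb] at h1
    simp only [neg_zero, zero_smul, sub_zero, sub_self] at h1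
    have hneg : (∫ s in a..b, -φ s • f'' s) = -(∫ s in a..b, φ s • f'' s) := by
      rw [← intervalIntegral.integral_neg]
      apply intervalIntegral.integral_congr
      intro x _; beta_reduce; rw [neg_smul]
    rw [hneg] at h1
    exact (neg_add_eq_zero.mp h1).symm
  -- split the weight
  have eqA : (∫ s in a..b, (T - s) • f s)
      = (T - m) • (∫ s in a..b, f s) + ∫ s in a..b, (m - s) • f s := by
    rw [← intervalIntegral.integral_smul, ← intervalIntegral.integral_add I6c I2]
    apply intervalIntegral.integral_congr
    intro x _
    beta_reduce
    rw [← add_smul]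
    congr 1
    ring
  -- constant part
  have eqC : (∫ s in a..b, (T - s) • (f a + f b))
      = ((T - m) * (b - a)) • (f a + f b) := by
    rw [intervalIntegral.integral_smul_const]
    congr 1
    rw [intervalIntegral.integral_sub intervalIntegrable_const
      (intervalIntegrable_id), intervalIntegral.integral_const, integral_id]
    rw [hm]; simp only [smul_eq_mul]; ring
  -- main identity
  have main_eq : (∫ s in a..b, (T - s) • f s) -
      (1/2 : ℝ) • ∫ s in a..b, (T - s) • (f a + f b)
      = (T - m) • (-(∫ s in a..b, φ s • f'' s)) - ∫ s in a..b, φ s • f' s := by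
    rw [eqA, eqC, eq2, eq1a, eq1b]
    module
  rw [main_eq]
  -- bounds
  have hg2 : ∀ s ∈ Set.Icc a b, ‖f'' s‖ ≤ B₂ := fun s hs => hB₂ s (hsub hs)
  have hg1 : ∀ s ∈ Set.Icc a b, ‖f' s‖ ≤ B₁ := fun s hs => hB₁ s (hsub hs)
  have hB₂0 : 0 ≤ B₂ := le_trans (norm_nonneg _) (hg2 a ⟨le_refl a, hab⟩)
  have hB₁0 : 0 ≤ B₁ := le_trans (norm_nonneg _) (hg1 a ⟨le_refl a, hab⟩)
  have hQ2 : ‖∫ s in a..b, φ s • f'' s‖ ≤ B₂ * (b - a)^3 / 12 :=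
    phi_bound a b B₂ hab hB₂0 f'' hg2
  have hQ1 : ‖∫ s in a..b, φ s • f' s‖ ≤ B₁ * (b - a)^3 / 12 :=
    phi_bound a b B₁ hab hB₁0 f' hg1
  calc ‖(T - m) • (-(∫ s in a..b, φ s • f'' s)) - ∫ s in a..b, φ s • f' s‖
      ≤ ‖(T - m) • (-(∫ s in a..b, φ s • f'' s))‖ + ‖∫ s in a..b, φ s • f' s‖ :=
        norm_sub_le _ _
    _ ≤ T * (B₂ * (b - a)^3 / 12) + B₁ * (b - a)^3 / 12 := by
        rw [norm_smul, Real.norm_eq_abs, abs_of_nonneg (by linarith : (0:ℝ) ≤ T - m),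
          norm_neg]
        have h1 : (T - m) * ‖∫ s in a..b, φ s • f'' s‖ ≤ T * (B₂ * (b - a)^3 / 12) :=
          mul_le_mul (by linarith) hQ2 (norm_nonneg _) hT0
        linarith [hQ1]
    _ = (T * B₂ + B₁) * (b - a)^3 / 12 := by ring


/-- Trapezoidal-type quadrature error bound (Lemma `trapz`). -/
theorem trapezoid_error
    {V : Type*} [NormedAddCommGroup V] [NormedSpace ℝ V] [CompleteSpace V]
    (T h B₁ B₂ : ℝ) (hT : 0 < T) (hh : 0 < h) (N : ℕ) (hN : 0 < N) (hTh : T = N * h)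
    (f f' f'' : ℝ → V)
    (hf : ∀ s ∈ Set.Icc (0:ℝ) T, HasDerivAt f (f' s) s)
    (hf' : ∀ s ∈ Set.Icc (0:ℝ) T, HasDerivAt f' (f'' s) s)
    (hB₁ : ∀ s ∈ Set.Icc (0:ℝ) T, ‖f' s‖ ≤ B₁)
    (hB₂ : ∀ s ∈ Set.Icc (0:ℝ) T, ‖f'' s‖ ≤ B₂) :
    ‖(∫ s in (0:ℝ)..T, (T - s) • f s) -
        (1/2 : ℝ) • ∫ s in (0:ℝ)..T, (T - s) • (f (gridFloor h s) + f (gridCeil h s))‖ ≤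
      h^2 / 12 * (B₂ * T^2 + B₁ * T) := by
  set a : ℕ → ℝ := fun k => (k : ℝ) * h with ha
  have ha0 : a 0 = 0 := by simp [ha]
  have haN : a N = T := by rw [ha, hTh]
  have hlt : ∀ k : ℕ, a k < a (k + 1) := by
    intro k
    simp only [ha]
    push_cast
    nlinarith [hh]
  have hstep : ∀ k : ℕ, a (k + 1) - a k = h := by
    intro k; simp only [ha]; push_cast; ring
  have hsub : ∀ k : ℕ, k < N → Set.Icc (a k) (a (k + 1)) ⊆ Set.Icc (0:ℝ) T := by
    intro k hk x hx
    have h1 : (0:ℝ) ≤ a k := by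
      simp only [ha]; positivity
    have h2 : a (k + 1) ≤ T := by
      rw [hTh]; simp only [ha]
      have hkN : ((k:ℝ) + 1) ≤ (N:ℝ) := by exact_mod_cast hk
      push_cast
      nlinarith [hh.le]
    exact ⟨le_trans h1 hx.1, le_trans hx.2 h2⟩
  have hIf : ∀ k < N, IntervalIntegrable (fun s => (T - s) • f s) volume (a k) (a (k + 1)) := by
    intro k hk
    apply ContinuousOn.intervalIntegrable
    intro x hx
    have hx' : x ∈ Set.Icc (0:ℝ) T := hsub k hk (Set.uIcc_of_le (hlt k).le ▸ hx)
    exact ((continuousAt_const.sub continuousAt_id).smul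
      (hf x hx').continuousAt).continuousWithinAt
  have split1 : (∫ s in (0:ℝ)..T, (T - s) • f s)
      = ∑ k ∈ Finset.range N, ∫ s in (a k)..(a (k+1)), (T - s) • f s := by
    rw [intervalIntegral.sum_integral_adjacent_intervals hIf, ha0, haN]
  have hgrid_ae : ∀ k : ℕ, ∀ᵐ s ∂(volume : Measure ℝ), s ∈ Set.uIoc (a k) (a (k+1)) →
      (T - s) • (f (gridFloor h s) + f (gridCeil h s)) = (T - s) • (f (a k) + f (a (k+1))) := by
    intro k
    rw [MeasureTheory.ae_iff]
    apply measure_mono_null ?_ (measure_singleton (a (k+1)))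
    intro x hx
    simp only [Set.mem_setOf_eq, Classical.not_imp] at hx
    obtain ⟨hx1, hx2⟩ := hx
    rw [Set.uIoc_of_le (hlt k).le] at hx1
    by_contra hne
    have hxlt : x < a (k+1) := lt_of_le_of_ne hx1.2 (by simpa using hne)
    have hfl : ⌊x / h⌋ = (k : ℤ) := by
      rw [Int.floor_eq_iff]
      constructor
      · push_cast
        rw [le_div_iff₀ hh]
        exact le_of_lt (by simpa [ha, mul_comm] using hx1.1)
      · push_cast
        rw [div_lt_iff₀ hh]
        simpa [ha, mul_comm] using hxlt
    have hcl : ⌈x / h⌉ = (k : ℤ) + 1 := by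
      rw [Int.ceil_eq_iff]
      constructor
      · push_cast
        rw [lt_div_iff₀ hh]
        simpa [ha, mul_comm] using hx1.1
      · push_cast
        rw [div_le_iff₀ hh]
        exact le_of_lt (by simpa [ha, mul_comm] using hxlt)
    apply hx2
    rw [gridFloor, gridCeil, hfl, hcl]
    simp only [ha]
    push_cast
    ring_nf
  have hIconst : ∀ k : ℕ, IntervalIntegrable
      (fun s => (T - s) • (f (a k) + f (a (k+1)))) volume (a k) (a (k+1)) :=
    fun k => (((continuous_const.sub continuous_id).smul continuous_const)).intervalIntegrable _ _
  have hIG : ∀ k < N, IntervalIntegrable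
      (fun s => (T - s) • (f (gridFloor h s) + f (gridCeil h s))) volume (a k) (a (k+1)) := by
    intro k _
    apply (hIconst k).congr_ae
    filter_upwards [MeasureTheory.ae_restrict_mem measurableSet_uIoc,
      MeasureTheory.ae_restrict_of_ae (hgrid_ae k)] with s hs h2
    exact (h2 hs).symm
  have split2 : (∫ s in (0:ℝ)..T, (T - s) • (f (gridFloor h s) + f (gridCeil h s)))
      = ∑ k ∈ Finset.range N, ∫ s in (a k)..(a (k+1)), (T - s) • (f (a k) + f (a (k+1))) := by
    have e1 := intervalIntegral.sum_integral_adjacent_intervals hIG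
    rw [ha0, haN] at e1
    rw [← e1]
    apply Finset.sum_congr rfl
    intro k _
    exact intervalIntegral.integral_congr_ae (hgrid_ae k)
  rw [split1, split2, Finset.smul_sum, ← Finset.sum_sub_distrib]
  calc ‖∑ k ∈ Finset.range N, ((∫ s in (a k)..(a (k+1)), (T - s) • f s) -
          (1/2 : ℝ) • ∫ s in (a k)..(a (k+1)), (T - s) • (f (a k) + f (a (k+1))))‖
      ≤ ∑ k ∈ Finset.range N, (T * B₂ + B₁) * h^3 / 12 := by
        refine (norm_sum_le _ _).trans (Finset.sum_le_sum ?_)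
        intro k hk
        have hkey := key_interval T B₁ B₂ f f' f'' hf hf' hB₁ hB₂ (a k) (a (k+1))
          (hlt k).le (hsub k (Finset.mem_range.mp hk))
        rwa [hstep k] at hkey
    _ = h^2 / 12 * (B₂ * T^2 + B₁ * T) := by
        rw [Finset.sum_const, Finset.card_range, nsmul_eq_mul, hTh]
        ring
end

section
/- Let A be a d×d real matrix with ‖A − I_d‖ ≤ 1/2 in operator norm (so the spectral radius of A − I_d is at most 1/2). Then trace(A − I_d) − log|det A| ≤ (‖A − I_d‖_F²/2)/(1 − ‖A − I_d‖) ≤ ‖A − I_d‖_F². -/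
open Matrix

/-- Operator norm of a `d × d` real matrix, acting on Euclidean space. -/
noncomputable def matOpNorm {d : ℕ} (A : Matrix (Fin d) (Fin d) ℝ) : ℝ :=
  ‖Matrix.toEuclideanCLM (𝕜 := ℝ) A‖

/-- Frobenius norm of a `d × d` real matrix. -/
noncomputable def matFrobNorm {d : ℕ} (A : Matrix (Fin d) (Fin d) ℝ) : ℝ :=
  Real.sqrt (∑ i : Fin d, ∑ j : Fin d, (A i j)^2)

set_option maxHeartbeats 1000000
set_option synthInstance.maxHeartbeats 400000

section Aux

variable {d : ℕ}

lemma mulVec_sq_sum_le (B : Matrix (Fin d) (Fin d) ℝ) (v : Fin d → ℝ) :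
    ∑ i, (B.mulVec v i)^2 ≤ ‖Matrix.toEuclideanCLM (𝕜 := ℝ) B‖^2 * ∑ i, (v i)^2 := by
  have h := (Matrix.toEuclideanCLM (𝕜 := ℝ) B).le_opNorm ((WithLp.equiv _ _).symm v)
  change ‖(WithLp.equiv 2 (Fin d → ℝ)).symm (Matrix.toLin' B v)‖ ≤ _ at h
  have h1 : ‖(WithLp.equiv 2 (Fin d → ℝ)).symm (Matrix.toLin' B v)‖
      = Real.sqrt (∑ i, (B.mulVec v i)^2) := by
    rw [EuclideanSpace.norm_eq]
    simp [Matrix.toLin'_apply, sq_abs]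
  have h2 : ‖(WithLp.equiv 2 (Fin d → ℝ)).symm v‖ = Real.sqrt (∑ i, (v i)^2) := by
    rw [EuclideanSpace.norm_eq]; simp [sq_abs]
  rw [h1, h2] at h
  have h3 : (0:ℝ) ≤ Real.sqrt (∑ i, (B.mulVec v i)^2) := Real.sqrt_nonneg _
  have h4 := mul_self_le_mul_self h3 h
  have e1 : Real.sqrt (∑ i, (B.mulVec v i)^2) * Real.sqrt (∑ i, (B.mulVec v i)^2)
      = ∑ i, (B.mulVec v i)^2 :=
    Real.mul_self_sqrt (Finset.sum_nonneg fun i _ => sq_nonneg _)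
  have e2 : Real.sqrt (∑ i, (v i)^2) * Real.sqrt (∑ i, (v i)^2) = ∑ i, (v i)^2 :=
    Real.mul_self_sqrt (Finset.sum_nonneg fun i _ => sq_nonneg _)
  nlinarith [norm_nonneg (Matrix.toEuclideanCLM (𝕜 := ℝ) B), Real.sqrt_nonneg (∑ i, (v i)^2)]

lemma trace_adjugate_mul (M E : Matrix (Fin d) (Fin d) ℝ) :
    Matrix.trace (M.adjugate * E) =
      ∑ σ : Equiv.Perm (Fin d), ((Equiv.Perm.sign σ : ℤ) : ℝ) *
        ∑ i, (∏ j ∈ Finset.univ.erase i, M (σ j) j) * E (σ i) i := by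
  have h1 : Matrix.trace (M.adjugate * E) = ∑ i, (M.adjugate *ᵥ (fun k => E k i)) i := by
    simp [Matrix.trace, Matrix.diag, Matrix.mul_apply, Matrix.mulVec, dotProduct]
  rw [h1]
  have h2 : ∀ i, (M.adjugate *ᵥ (fun k => E k i)) i = (M.updateCol i (fun k => E k i)).det := by
    intro i
    rw [← Matrix.cramer_eq_adjugate_mulVec, Matrix.cramer_apply]
  simp_rw [h2, Matrix.det_apply']
  rw [Finset.sum_comm]
  congr 1
  ext σ
  rw [Finset.mul_sum]
  congr 1
  ext i
  have h3 : ∀ j, (M.updateCol i (fun k => E k i)) (σ j) j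
      = if j = i then E (σ j) i else M (σ j) j := by
    intro j; rw [Matrix.updateCol_apply]
  rw [Finset.prod_congr rfl (fun j _ => h3 j),
    ← Finset.mul_prod_erase Finset.univ _ (Finset.mem_univ i)]
  rw [Finset.prod_congr rfl (fun j hj => if_neg (Finset.ne_of_mem_erase hj))]
  simp only [if_true, ite_true, eq_self_iff_true]
  ring

lemma hasDerivAt_det_one_add_smul (E : Matrix (Fin d) (Fin d) ℝ) (t : ℝ) :
    HasDerivAt (fun s : ℝ => Matrix.det (1 + s • E))
      (Matrix.trace ((1 + t • E).adjugate * E)) t := by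
  have h : ∀ s : ℝ, Matrix.det (1 + s • E)
      = ∑ σ : Equiv.Perm (Fin d), ((Equiv.Perm.sign σ : ℤ) : ℝ) *
          ∏ i, ((1 : Matrix (Fin d) (Fin d) ℝ) (σ i) i + s * E (σ i) i) := by
    intro s
    rw [Matrix.det_apply']
    simp only [Matrix.add_apply, Matrix.smul_apply, smul_eq_mul]
  simp_rw [h]
  rw [trace_adjugate_mul]
  apply HasDerivAt.fun_sum
  intro σ _
  have hf : ∀ i : Fin d, HasDerivAt
      (fun s : ℝ => (1 : Matrix (Fin d) (Fin d) ℝ) (σ i) i + s * E (σ i) i) (E (σ i) i) t := by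
    intro i
    simpa using ((hasDerivAt_id t).mul_const (E (σ i) i)).const_add
      ((1 : Matrix (Fin d) (Fin d) ℝ) (σ i) i)
  have hprod := HasDerivAt.fun_finsetProd (u := Finset.univ) (fun i _ => hf i)
  have := hprod.const_mul (((Equiv.Perm.sign σ : ℤ) : ℝ))
  exact this

lemma unit_and_inv_bound (B : Matrix (Fin d) (Fin d) ℝ)
    (h : ‖Matrix.toEuclideanCLM (𝕜 := ℝ) B‖ < 1) :
    IsUnit (1 + B).det ∧
      ‖Matrix.toEuclideanCLM (𝕜 := ℝ) (n := Fin d) ((1 + B)⁻¹)‖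
        ≤ (1 - ‖Matrix.toEuclideanCLM (𝕜 := ℝ) B‖)⁻¹ := by
  set φ := Matrix.toEuclideanCLM (𝕜 := ℝ) (n := Fin d)
  have hx : ‖-(φ B)‖ < 1 := by rwa [norm_neg]
  set u := Units.oneSub (-(φ B)) hx with hu
  have huval : (u : EuclideanSpace ℝ (Fin d) →L[ℝ] EuclideanSpace ℝ (Fin d)) = φ (1 + B) := by
    simp [hu, Units.oneSub, map_add, _root_.map_one, sub_neg_eq_add]
  have hunit : IsUnit (1 + B) := by
    have : IsUnit (φ (1 + B)) := by rw [← huval]; exact u.isUnit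
    have h2 := this.map φ.symm
    simpa using h2
  have hdet : IsUnit (1 + B).det := (Matrix.isUnit_iff_isUnit_det _).mp hunit
  refine ⟨hdet, ?_⟩
  have hmul : (1 + B) * (1 + B)⁻¹ = 1 := Matrix.mul_nonsing_inv _ hdet
  have hmul' : φ (1 + B) * φ ((1 + B)⁻¹) = 1 := by
    rw [← _root_.map_mul, hmul, _root_.map_one]
  have hinv : ((u⁻¹ : _ˣ) : EuclideanSpace ℝ (Fin d) →L[ℝ] EuclideanSpace ℝ (Fin d))
      = φ ((1 + B)⁻¹) := by
    apply Units.inv_eq_of_mul_eq_one_right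
    rw [huval]; exact hmul'
  rw [← hinv]
  have hrfl : ((u⁻¹ : _ˣ) : EuclideanSpace ℝ (Fin d) →L[ℝ] EuclideanSpace ℝ (Fin d))
      = ∑' n : ℕ, (-(φ B)) ^ n := rfl
  rw [hrfl]
  have hb := tsum_geometric_le_of_norm_lt_one _ hx
  have h1 : ‖(1 : EuclideanSpace ℝ (Fin d) →L[ℝ] EuclideanSpace ℝ (Fin d))‖ ≤ 1 :=
    ContinuousLinearMap.norm_id_le
  rw [norm_neg] at hb
  linarith

lemma trace_mul_le' (P Q : Matrix (Fin d) (Fin d) ℝ) :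
    Matrix.trace (P * Q) ≤
      Real.sqrt (∑ i, ∑ j, (P i j)^2) * Real.sqrt (∑ i, ∑ j, (Q i j)^2) := by
  have h0 : Matrix.trace (P * Q) = ∑ p : Fin d × Fin d, P p.1 p.2 * Q p.2 p.1 := by
    rw [Fintype.sum_prod_type]
    simp [Matrix.trace, Matrix.diag, Matrix.mul_apply]
  have h := Real.sum_mul_le_sqrt_mul_sqrt Finset.univ
    (fun p : Fin d × Fin d => P p.1 p.2) (fun p : Fin d × Fin d => Q p.2 p.1)
  rw [h0]
  have e1 : ∑ p : Fin d × Fin d, (P p.1 p.2)^2 = ∑ i, ∑ j, (P i j)^2 :=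
    Fintype.sum_prod_type _
  have e2 : ∑ p : Fin d × Fin d, (Q p.2 p.1)^2 = ∑ i, ∑ j, (Q i j)^2 := by
    rw [Fintype.sum_prod_type, Finset.sum_comm]
  rw [e1, e2] at h
  exact h

lemma frob_sq_mul_le (P E : Matrix (Fin d) (Fin d) ℝ) :
    ∑ i, ∑ j, ((P * E) i j)^2
      ≤ ‖Matrix.toEuclideanCLM (𝕜 := ℝ) P‖^2 * ∑ i, ∑ j, (E i j)^2 := by
  rw [Finset.sum_comm]
  have h1 : ∀ j, ∑ i, ((P * E) i j)^2 = ∑ i, (P.mulVec (fun k => E k j) i)^2 := by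
    intro j; apply Finset.sum_congr rfl; intro i _
    simp [Matrix.mul_apply, Matrix.mulVec, dotProduct]
  calc ∑ j, ∑ i, ((P * E) i j)^2
      ≤ ∑ j, ‖Matrix.toEuclideanCLM (𝕜 := ℝ) P‖^2 * ∑ i, (E i j)^2 := by
        apply Finset.sum_le_sum; intro j _; rw [h1 j]; exact mulVec_sq_sum_le _ _
    _ = ‖Matrix.toEuclideanCLM (𝕜 := ℝ) P‖^2 * ∑ i, ∑ j, (E i j)^2 := by
        rw [← Finset.mul_sum, Finset.sum_comm]

end Aux

/-- Trace–log-determinant estimate for near-identity matrices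
(Theorem 1.1 of Rump 2018 as used in the paper). -/
theorem trace_log_det_bound {d : ℕ} (A : Matrix (Fin d) (Fin d) ℝ)
    (hA : matOpNorm (A - 1) ≤ 1/2) :
    Matrix.trace (A - 1) - Real.log |A.det| ≤
        (matFrobNorm (A - 1))^2 / 2 / (1 - matOpNorm (A - 1)) ∧
      (matFrobNorm (A - 1))^2 / 2 / (1 - matOpNorm (A - 1)) ≤ (matFrobNorm (A - 1))^2 := by
  set E := A - 1 with hEdef
  set q := matOpNorm E with hqdef
  have hq0 : 0 ≤ q := norm_nonneg _
  set F2 := ∑ i, ∑ j, (E i j)^2 with hF2def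
  have hF20 : 0 ≤ F2 := Finset.sum_nonneg fun i _ => Finset.sum_nonneg fun j _ => sq_nonneg _
  have hfrob : (matFrobNorm E)^2 = F2 := Real.sq_sqrt hF20
  have hqlt : q < 1 := lt_of_le_of_lt hA (by norm_num)
  have h1q : 0 < 1 - q := by linarith
  -- smul norm
  have hsm : ∀ t : ℝ, 0 ≤ t →
      ‖Matrix.toEuclideanCLM (𝕜 := ℝ) (t • E)‖ = t * q := by
    intro t ht
    rw [_root_.map_smul]
    have hns := norm_smul t (Matrix.toEuclideanCLM (𝕜 := ℝ) E)
    rw [hns, Real.norm_eq_abs, abs_of_nonneg ht]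
    rfl
  -- units and inverse bounds on [0,1]
  have hUB : ∀ t ∈ Set.Icc (0:ℝ) 1, IsUnit (1 + t • E).det ∧
      ‖Matrix.toEuclideanCLM (𝕜 := ℝ) (n := Fin d) ((1 + t • E)⁻¹)‖ ≤ (1 - t * q)⁻¹ := by
    intro t ht
    have hlt : ‖Matrix.toEuclideanCLM (𝕜 := ℝ) (t • E)‖ < 1 := by
      rw [hsm t ht.1]
      nlinarith [ht.1, ht.2, hA]
    have := unit_and_inv_bound (t • E) hlt
    rwa [hsm t ht.1] at this
  have hdet_ne : ∀ t ∈ Set.Icc (0:ℝ) 1, (1 + t • E).det ≠ 0 := by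
    intro t ht
    exact ((hUB t ht).1).ne_zero
  have hA_eq : A = 1 + (1:ℝ) • E := by
    rw [one_smul, hEdef]; abel
  -- positivity of det A
  have hdetA_pos : 0 < A.det := by
    by_contra hle
    push_neg at hle
    have hc : Continuous fun t : ℝ => (1 + t • E).det :=
      continuous_iff_continuousAt.mpr fun t => (hasDerivAt_det_one_add_smul E t).continuousAt
    have h0 : (1 + (0:ℝ) • E).det = 1 := by simp
    have h1 : (1 + (1:ℝ) • E).det = A.det := by rw [← hA_eq]
    have hmem : (0:ℝ) ∈ Set.Icc ((fun t : ℝ => (1 + t • E).det) 1)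
        ((fun t : ℝ => (1 + t • E).det) 0) := by
      simp only [h0, h1]
      exact ⟨hle, zero_le_one⟩
    obtain ⟨t, ht, hft⟩ := intermediate_value_Icc' (zero_le_one) hc.continuousOn hmem
    exact hdet_ne t ht hft
  -- key trace bound
  have hstep : ∀ t ∈ Set.Icc (0:ℝ) 1,
      Matrix.trace ((1 + t • E)⁻¹ * E * E) ≤ F2 * (1 - q)⁻¹ := by
    intro t ht
    set N := ‖Matrix.toEuclideanCLM (𝕜 := ℝ) (n := Fin d) ((1 + t • E)⁻¹)‖ with hN
    have hN0 : 0 ≤ N := norm_nonneg _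
    have hNle : N ≤ (1 - q)⁻¹ := by
      refine le_trans (hUB t ht).2 ?_
      have htq : t * q ≤ q := by nlinarith [ht.1, ht.2]
      have h2 : 0 < 1 - t * q := by nlinarith [ht.1, ht.2]
      exact inv_anti₀ h1q (by linarith)
    have hCS := trace_mul_le' ((1 + t • E)⁻¹ * E) E
    have hfr := frob_sq_mul_le ((1 + t • E)⁻¹) E
    have hsq1 : Real.sqrt (∑ i, ∑ j, (((1 + t • E)⁻¹ * E) i j)^2)
        ≤ N * Real.sqrt F2 := by
      have : Real.sqrt (∑ i, ∑ j, (((1 + t • E)⁻¹ * E) i j)^2)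
          ≤ Real.sqrt (N^2 * F2) := Real.sqrt_le_sqrt (by rw [hF2def]; exact hfr)
      rwa [Real.sqrt_mul (sq_nonneg N), Real.sqrt_sq hN0] at this
    have hs0 : 0 ≤ Real.sqrt F2 := Real.sqrt_nonneg _
    have hmm : Real.sqrt F2 * Real.sqrt F2 = F2 := Real.mul_self_sqrt hF20
    calc Matrix.trace ((1 + t • E)⁻¹ * E * E)
        ≤ Real.sqrt (∑ i, ∑ j, (((1 + t • E)⁻¹ * E) i j)^2) * Real.sqrt F2 := by
          rw [hF2def]; exact hCS
      _ ≤ (N * Real.sqrt F2) * Real.sqrt F2 := by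
          apply mul_le_mul_of_nonneg_right hsq1 hs0
      _ = N * F2 := by rw [mul_assoc, hmm]
      _ ≤ F2 * (1 - q)⁻¹ := by
          rw [mul_comm]
          exact mul_le_mul_of_nonneg_left hNle hF20
  -- the auxiliary function and its derivative
  set g : ℝ → ℝ := fun s => F2 * (1 - q)⁻¹ / 2 * s^2 - s * Matrix.trace E
      + Real.log ((1 + s • E).det) with hgdef
  have hg : ∀ t ∈ Set.Icc (0:ℝ) 1, HasDerivAt g
      (F2 * (1 - q)⁻¹ * t - Matrix.trace E
        + Matrix.trace ((1 + t • E).adjugate * E) / (1 + t • E).det) t := by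
    intro t ht
    have h1 := (hasDerivAt_pow 2 t).const_mul (F2 * (1 - q)⁻¹ / 2)
    have h2 := (hasDerivAt_id t).mul_const (Matrix.trace E)
    have h3 := (hasDerivAt_det_one_add_smul E t).log (hdet_ne t ht)
    have := (h1.sub h2).add h3
    refine this.congr_deriv ?_
    simp [pow_one]
    ring
  -- derivative nonneg
  have hgd : ∀ t ∈ Set.Icc (0:ℝ) 1,
      0 ≤ F2 * (1 - q)⁻¹ * t - Matrix.trace E
        + Matrix.trace ((1 + t • E).adjugate * E) / (1 + t • E).det := by
    intro t ht
    have hdet := hdet_ne t ht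
    have hinv_mul : ((1 + t • E)⁻¹ : Matrix (Fin d) (Fin d) ℝ) * (1 + t • E) = 1 :=
      Matrix.nonsing_inv_mul _ (hUB t ht).1
    -- adjugate trace over det equals trace of inverse-mul
    have htr1 : Matrix.trace ((1 + t • E)⁻¹ * E)
        = Matrix.trace ((1 + t • E).adjugate * E) / (1 + t • E).det := by
      rw [Matrix.inv_def, Matrix.smul_mul, Matrix.trace_smul, Ring.inverse_eq_inv',
        smul_eq_mul, div_eq_inv_mul]
    -- trace E - trace(inv * E) = t * trace (inv * E * E)
    have hkey : Matrix.trace E - Matrix.trace ((1 + t • E)⁻¹ * E)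
        = t * Matrix.trace ((1 + t • E)⁻¹ * E * E) := by
      have hsub : (1 : Matrix (Fin d) (Fin d) ℝ) - (1 + t • E)⁻¹
          = (1 + t • E)⁻¹ * (t • E) := by
        have h6 := Matrix.mul_sub ((1 + t • E)⁻¹) (1 + t • E) 1
        rw [hinv_mul, Matrix.mul_one] at h6
        rw [← h6]
        congr 1
        abel
      have h5 : E - (1 + t • E)⁻¹ * E = t • ((1 + t • E)⁻¹ * E * E) := by
        calc E - (1 + t • E)⁻¹ * E
            = ((1 : Matrix (Fin d) (Fin d) ℝ) - (1 + t • E)⁻¹) * E := by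
              rw [Matrix.sub_mul, Matrix.one_mul]
          _ = ((1 + t • E)⁻¹ * (t • E)) * E := by rw [hsub]
          _ = t • ((1 + t • E)⁻¹ * E * E) := by
              rw [Matrix.mul_smul, Matrix.smul_mul]
      have := congrArg Matrix.trace h5
      rwa [Matrix.trace_sub, Matrix.trace_smul, smul_eq_mul] at this
    rw [← htr1]
    have hb := hstep t ht
    nlinarith [ht.1, ht.2, mul_le_mul_of_nonneg_left hb ht.1]
  -- monotonicity
  have hmono : MonotoneOn g (Set.Icc (0:ℝ) 1) := by
    apply monotoneOn_of_deriv_nonneg (convex_Icc 0 1)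
    · intro t ht
      exact (hg t ht).continuousAt.continuousWithinAt
    · intro t ht
      rw [interior_Icc] at ht
      exact ((hg t (Set.mem_Icc_of_Ioo ht)).differentiableAt).differentiableWithinAt
    · intro t ht
      rw [interior_Icc] at ht
      rw [(hg t (Set.mem_Icc_of_Ioo ht)).deriv]
      exact hgd t (Set.mem_Icc_of_Ioo ht)
  have h01 : g 0 ≤ g 1 := hmono (Set.left_mem_Icc.mpr zero_le_one)
    (Set.right_mem_Icc.mpr zero_le_one) zero_le_one
  have hg0 : g 0 = 0 := by
    simp [hgdef]
  have hg1 : g 1 = F2 * (1 - q)⁻¹ / 2 - Matrix.trace E + Real.log A.det := by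
    rw [hgdef]
    simp only [one_pow, one_smul, one_mul]
    have hOA : (1 : Matrix (Fin d) (Fin d) ℝ) + E = A := by rw [hEdef]; abel
    rw [hOA]
    ring
  rw [hg0, hg1] at h01
  have hlogabs : Real.log |A.det| = Real.log A.det := by rw [abs_of_pos hdetA_pos]
  constructor
  · rw [hlogabs, hfrob]
    have : F2 / 2 / (1 - q) = F2 * (1 - q)⁻¹ / 2 := by ring
    rw [this]
    linarith
  · rw [hfrob]
    rw [div_div]
    apply div_le_self hF20
    nlinarith
end

section
/- Let U ∈ C²(ℝ^d) with ‖D²U‖ ≤ L (operator norm). Fix T > 0, h > 0 with T/h ∈ ℕ and L T² ≤ (2/5)π². Then for any endpoints a, b ∈ ℝ^d, the discrete action sum S_h(q̃) = Σ_{k=0}^{N−1} L_h(q̃_{t_k}, q̃_{t_{k+1}}), with discrete Lagrangian L_h(x,y) = (h/2)(‖y − x‖²/h² − U(y) − U(x)), is strongly convex on the space of discrete paths q̃ : {kh}_{k=0}^N → ℝ^d with q̃_0 = a and q̃_T = b. In particular, D²S_h(q̃)(u,u) ≥ ((2/5)(π²/T²) − L) Σ_{k=1}^{N−1} h‖u_{t_k}‖²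 for all variations u vanishing at the endpoints. -/
open Finset Real

set_option maxHeartbeats 1000000

/-- Strong convexity of the discrete action sum of velocity Verlet
(Müller & Ortiz 2004): the second variation
`D²S_h(q̃)(u,u) = Σ_{k<N} ‖u_{k+1} − u_k‖²/h − h Σ_{0<k<N} D²U(q̃_k)(u_k,u_k)`
is bounded below by `((2/5)π²/T² − L) Σ_{0<k<N} h‖u_k‖²` for variations `u`
vanishing at the endpoints. -/
theorem discrete_action_strongly_convex {d : ℕ}
    (U : EuclideanSpace ℝ (Fin d) → ℝ)
    (U' : EuclideanSpace ℝ (Fin d) → (EuclideanSpace ℝ (Fin d) →L[ℝ] ℝ))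
    (U'' : EuclideanSpace ℝ (Fin d) →
      (EuclideanSpace ℝ (Fin d) →L[ℝ] EuclideanSpace ℝ (Fin d) →L[ℝ] ℝ))
    (L T h : ℝ) (N : ℕ)
    (hU' : ∀ x, HasFDerivAt U (U' x) x)
    (hU'' : ∀ x, HasFDerivAt U' (U'' x) x)
    (hL : ∀ x, ‖U'' x‖ ≤ L)
    (hh : 0 < h) (hN : 0 < N) (hTh : T = N * h)
    (hLT : L * T^2 ≤ (2/5) * π^2)
    (a b : EuclideanSpace ℝ (Fin d))
    (q : ℕ → EuclideanSpace ℝ (Fin d)) (hqa : q 0 = a) (hqb : q N = b)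
    (u : ℕ → EuclideanSpace ℝ (Fin d)) (hu0 : u 0 = 0) (huN : u N = 0) :
    ((2/5) * (π^2 / T^2) - L) * ∑ k ∈ Finset.Ioo 0 N, h * ‖u k‖^2 ≤
      (∑ k ∈ Finset.range N, ‖u (k+1) - u k‖^2 / h) -
        h * ∑ k ∈ Finset.Ioo 0 N, U'' (q k) (u k) (u k) := by
  set S : ℝ := ∑ k ∈ Finset.range N, ‖u (k+1) - u k‖^2 with hSdef
  have hS0 : 0 ≤ S := Finset.sum_nonneg fun _ _ => sq_nonneg _
  have hNR : (0:ℝ) < N := by exact_mod_cast hN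
  -- Cauchy-Schwarz for partial sums of increments
  have cs : ∀ (s : Finset ℕ),
      ‖∑ j ∈ s, (u (j+1) - u j)‖^2 ≤ s.card * ∑ j ∈ s, ‖u (j+1) - u j‖^2 := by
    intro s
    calc ‖∑ j ∈ s, (u (j+1) - u j)‖^2 ≤ (∑ j ∈ s, ‖u (j+1) - u j‖)^2 := by
          have := norm_sum_le s (fun j => u (j+1) - u j)
          nlinarith [norm_nonneg (∑ j ∈ s, (u (j+1) - u j)),
            Finset.sum_nonneg (fun j (_ : j ∈ s) => norm_nonneg (u (j+1) - u j))]
      _ ≤ s.card * ∑ j ∈ s, ‖u (j+1) - u j‖^2 := sq_sum_le_card_mul_sum_sq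
  -- Pointwise bound: ‖u k‖² ≤ N S / 4 for 0 < k < N
  have pointwise : ∀ k ∈ Finset.Ioo 0 N, ‖u k‖^2 ≤ (N:ℝ) * S / 4 := by
    intro k hk
    obtain ⟨hk0, hkN⟩ := Finset.mem_Ioo.mp hk
    have hkN' : k ≤ N := le_of_lt hkN
    -- left telescoping
    have tel1 : ∑ j ∈ Finset.range k, (u (j+1) - u j) = u k := by
      rw [Finset.sum_range_sub u k, hu0, sub_zero]
    -- right telescoping
    have tel2 : ∑ j ∈ Finset.Ico k N, (u (j+1) - u j) = - u k := by
      rw [Finset.sum_Ico_eq_sub _ hkN', Finset.sum_range_sub u, Finset.sum_range_sub u,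
        hu0, huN]
      abel
    have h1 : ‖u k‖^2 ≤ (k:ℝ) * ∑ j ∈ Finset.range k, ‖u (j+1) - u j‖^2 := by
      have := cs (Finset.range k); rw [tel1] at this; simpa using this
    have h2 : ‖u k‖^2 ≤ ((N:ℝ) - k) * ∑ j ∈ Finset.Ico k N, ‖u (j+1) - u j‖^2 := by
      have := cs (Finset.Ico k N); rw [tel2, norm_neg] at this
      rwa [Nat.card_Ico, Nat.cast_sub hkN'] at this
    have hsplit : (∑ j ∈ Finset.range k, ‖u (j+1) - u j‖^2)
        + ∑ j ∈ Finset.Ico k N, ‖u (j+1) - u j‖^2 = S := by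
      rw [hSdef, Finset.range_eq_Ico, Finset.range_eq_Ico]
      exact Finset.sum_Ico_consecutive (fun j => ‖u (j+1) - u j‖^2) (Nat.zero_le k) hkN'
    have S1nn : 0 ≤ ∑ j ∈ Finset.range k, ‖u (j+1) - u j‖^2 :=
      Finset.sum_nonneg fun _ _ => sq_nonneg _
    have S2nn : 0 ≤ ∑ j ∈ Finset.Ico k N, ‖u (j+1) - u j‖^2 :=
      Finset.sum_nonneg fun _ _ => sq_nonneg _
    have hkR : (0:ℝ) < k := by exact_mod_cast hk0
    have hkNR : (k:ℝ) < N := by exact_mod_cast hkN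
    -- N ‖u k‖² ≤ k (N-k) S ≤ N²/4 S
    have e1 : ((N:ℝ) - k) * ‖u k‖^2
        ≤ ((N:ℝ) - k) * ((k:ℝ) * ∑ j ∈ Finset.range k, ‖u (j+1) - u j‖^2) :=
      mul_le_mul_of_nonneg_left h1 (by linarith)
    have e2 : (k:ℝ) * ‖u k‖^2
        ≤ (k:ℝ) * (((N:ℝ) - k) * ∑ j ∈ Finset.Ico k N, ‖u (j+1) - u j‖^2) :=
      mul_le_mul_of_nonneg_left h2 (le_of_lt hkR)
    have e3 : (N:ℝ) * ‖u k‖^2 ≤ (k:ℝ) * ((N:ℝ) - k) * S := by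
      rw [← hsplit]; nlinarith [e1, e2]
    nlinarith [e3, mul_nonneg hS0 (sq_nonneg ((N:ℝ) - 2*k)), hNR]
  -- sum bound
  have sum_bound : ∑ k ∈ Finset.Ioo 0 N, ‖u k‖^2 ≤ ((N:ℝ) - 1) * ((N:ℝ) * S / 4) := by
    calc ∑ k ∈ Finset.Ioo 0 N, ‖u k‖^2
        ≤ ∑ k ∈ Finset.Ioo 0 N, (N:ℝ) * S / 4 := Finset.sum_le_sum pointwise
      _ = ((Finset.Ioo 0 N).card : ℝ) * ((N:ℝ) * S / 4) := by
          rw [Finset.sum_const, nsmul_eq_mul]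
      _ = ((N:ℝ) - 1) * ((N:ℝ) * S / 4) := by
          rw [Nat.card_Ioo]
          congr 1
          have : (N - 0 - 1 : ℕ) = N - 1 := by omega
          rw [this, Nat.cast_sub hN, Nat.cast_one]
  have hpi2 : π^2 ≤ 10 := by nlinarith [Real.pi_lt_d2, Real.pi_gt_three]
  have hpisq : (0:ℝ) ≤ π^2 := sq_nonneg _
  -- Poincaré: (2/5)(π²/T²) ∑ h‖u k‖² ≤ S / h
  have poincare : (2/5) * (π^2 / T^2) * ∑ k ∈ Finset.Ioo 0 N, h * ‖u k‖^2 ≤ S / h := by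
    have hT2 : T^2 = (N:ℝ)^2 * h^2 := by rw [hTh]; ring
    rw [← Finset.mul_sum, hT2]
    have key : (2/5) * π^2 * ∑ k ∈ Finset.Ioo 0 N, ‖u k‖^2 ≤ (N:ℝ)^2 * S := by
      have hN1 : (1:ℝ) ≤ N := by exact_mod_cast hN
      have sumnn : 0 ≤ ∑ k ∈ Finset.Ioo 0 N, ‖u k‖^2 :=
        Finset.sum_nonneg fun _ _ => sq_nonneg _
      have p1 : 0 ≤ (10 - π^2) * ∑ k ∈ Finset.Ioo 0 N, ‖u k‖^2 :=
        mul_nonneg (by linarith) sumnn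
      have p2 : 0 ≤ S * (N:ℝ) := mul_nonneg hS0 hNR.le
      nlinarith [sum_bound, p1, p2]
    calc (2/5) * (π^2 / ((N:ℝ)^2 * h^2)) * (h * ∑ k ∈ Finset.Ioo 0 N, ‖u k‖^2)
        = ((2/5) * π^2 * ∑ k ∈ Finset.Ioo 0 N, ‖u k‖^2) / ((N:ℝ)^2 * h) := by
          field_simp
      _ ≤ ((N:ℝ)^2 * S) / ((N:ℝ)^2 * h) := by
          gcongr
      _ = S / h := by rw [mul_div_mul_left _ _ (by positivity : ((N:ℝ)^2) ≠ 0)]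
  -- Hessian bound
  have hL0 : 0 ≤ L := le_trans (norm_nonneg (U'' 0)) (hL 0)
  have hess : ∀ k ∈ Finset.Ioo 0 N, U'' (q k) (u k) (u k) ≤ L * ‖u k‖^2 := by
    intro k _
    have h1 : U'' (q k) (u k) (u k) ≤ ‖U'' (q k) (u k) (u k)‖ := by
      rw [Real.norm_eq_abs]; exact le_abs_self _
    have h2 : ‖U'' (q k) (u k) (u k)‖ ≤ ‖U'' (q k) (u k)‖ * ‖u k‖ :=
      (U'' (q k) (u k)).le_opNorm (u k)
    have h3 : ‖U'' (q k) (u k)‖ ≤ ‖U'' (q k)‖ * ‖u k‖ :=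
      (U'' (q k)).le_opNorm (u k)
    nlinarith [hL (q k), norm_nonneg (u k), norm_nonneg (U'' (q k) (u k)),
      norm_nonneg (U'' (q k))]
  have hessSum : h * ∑ k ∈ Finset.Ioo 0 N, U'' (q k) (u k) (u k)
      ≤ L * ∑ k ∈ Finset.Ioo 0 N, h * ‖u k‖^2 := by
    rw [Finset.mul_sum, Finset.mul_sum]
    apply Finset.sum_le_sum
    intro k hk
    nlinarith [hess k hk, hh.le]
  have hsumdiv : ∑ k ∈ Finset.range N, ‖u (k+1) - u k‖^2 / h = S / h := by
    rw [hSdef, Finset.sum_div]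
  rw [hsumdiv, sub_mul]
  linarith [poincare, hessSum]
end

section
/- For u : {0, 1, ..., N} → ℝ^d with u_0 = u_N = 0 and h = T/N, the discrete Poincaré inequality holds: (1/h) Σ_{k=0}^{N−1} ‖u_{k+1} − u_k‖² ≥ (π²/T²)(sin(π/(2N))/(π/(2N)))² Σ_{k=1}^{N−1} h‖u_k‖² ≥ (2π²/(5T²)) Σ_{k=1}^{N−1} h‖u_k‖². -/
open Finset Real

lemma smul_norm_identity {E : Type*} [NormedAddCommGroup E] [InnerProductSpace ℝ E]
    {a b : ℝ} (ha : 0 ≤ a) (hb : 0 ≤ b) (x y : E) :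
    ‖b • y - a • x‖ ^ 2 =
      a * b * ‖y - x‖ ^ 2 + ((b ^ 2 - a * b) * ‖y‖ ^ 2 + (a ^ 2 - a * b) * ‖x‖ ^ 2) := by
  rw [norm_sub_sq_real, norm_sub_sq_real, norm_smul, norm_smul,
    real_inner_smul_left, real_inner_smul_right]
  simp only [Real.norm_eq_abs, abs_of_nonneg ha, abs_of_nonneg hb]
  ring

lemma key_spectral {d : ℕ} (N : ℕ) (hN : 0 < N)
    (u : ℕ → EuclideanSpace ℝ (Fin d)) (hu0 : u 0 = 0) (huN : u N = 0) :
    4 * Real.sin (π / (2 * N)) ^ 2 * ∑ k ∈ Finset.Ioo 0 N, ‖u k‖ ^ 2 ≤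
      ∑ k ∈ Finset.range N, ‖u (k + 1) - u k‖ ^ 2 := by
  set lam : ℝ := 4 * Real.sin (π / (2 * N)) ^ 2 with hlam
  set v : ℕ → ℝ := fun k => Real.sin (k * π / N) with hv
  set w : ℕ → EuclideanSpace ℝ (Fin d) := fun k => (v k)⁻¹ • u k with hw
  have hNR : (0:ℝ) < N := by exact_mod_cast hN
  have hv0 : v 0 = 0 := by simp [hv]
  have hvN : v N = 0 := by
    have hx : (N:ℝ) * π / N = π := by field_simp
    simp only [hv, hx, Real.sin_pi]
  have hvnonneg : ∀ k ≤ N, 0 ≤ v k := by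
    intro k hk
    apply Real.sin_nonneg_of_nonneg_of_le_pi
    · positivity
    · rw [div_le_iff₀ hNR]
      have : (k:ℝ) ≤ N := by exact_mod_cast hk
      nlinarith [Real.pi_pos]
  have hvpos : ∀ k, 0 < k → k < N → 0 < v k := by
    intro k hk1 hk2
    apply Real.sin_pos_of_pos_of_lt_pi
    · have : (0:ℝ) < k := by exact_mod_cast hk1
      positivity
    · rw [div_lt_iff₀ hNR]
      have : (k:ℝ) < N := by exact_mod_cast hk2
      nlinarith [Real.pi_pos]
  have huw : ∀ k ≤ N, u k = v k • w k := by
    intro k hk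
    rcases eq_or_lt_of_le (Nat.zero_le k) with h0 | h0
    · simp [← h0, hu0, hv0]
    rcases eq_or_lt_of_le hk with hN' | hN'
    · simp [hN', huN, hvN]
    · rw [hw]
      rw [smul_inv_smul₀ (ne_of_gt (hvpos k h0 hN'))]
  -- eigen relation: v (k+1) + v (k-1) = (2 - lam) * v k  for 1 ≤ k
  have heig : ∀ k : ℕ, 1 ≤ k → v (k+1) + v (k-1) = (2 - lam) * v k := by
    intro k hk
    have hk' : ((k - 1 : ℕ) : ℝ) = (k : ℝ) - 1 := by
      have := Nat.cast_sub hk (R := ℝ); simpa using this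
    have hcos : Real.cos (π / N) = 1 - 2 * Real.sin (π / (2 * N)) ^ 2 := by
      have h2 : π / N = 2 * (π / (2 * N)) := by ring
      rw [h2, Real.cos_two_mul, Real.cos_sq']
      ring
    have e1 : ((k:ℝ)+1) * π / N = k * π / N + π / N := by ring
    have e2 : ((k:ℝ)-1) * π / N = k * π / N - π / N := by ring
    simp only [hv, Nat.cast_add, Nat.cast_one, hk', e1, e2]
    rw [Real.sin_add, Real.sin_sub, hcos, hlam]
    ring
  -- per-term identity
  have hterm : ∀ k < N,
      ‖u (k+1) - u k‖ ^ 2 =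
        v k * v (k+1) * ‖w (k+1) - w k‖ ^ 2
        + ((v (k+1) ^ 2 - v k * v (k+1)) * ‖w (k+1)‖ ^ 2
           + (v k ^ 2 - v k * v (k+1)) * ‖w k‖ ^ 2) := by
    intro k hk
    rw [huw k (le_of_lt hk), huw (k+1) (by omega)]
    exact smul_norm_identity (hvnonneg k (le_of_lt hk)) (hvnonneg (k+1) (by omega)) _ _
  -- reduce N = M + 1
  obtain ⟨M, rfl⟩ : ∃ M, N = M + 1 := ⟨N - 1, by omega⟩
  set g : ℕ → ℝ := fun j => (v j ^ 2 - v (j - 1) * v j) * ‖w j‖ ^ 2 with hg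
  set al : ℕ → ℝ := fun k => (v k ^ 2 - v k * v (k + 1)) * ‖w k‖ ^ 2 with hal
  have hg0 : g 0 = 0 := by simp [hg, hv0]
  have hgN : g (M + 1) = 0 := by simp [hg, hvN]
  have hal0 : al 0 = 0 := by simp [hal, hv0]
  have hsum1 : ∑ k ∈ Finset.range (M + 1), ‖u (k + 1) - u k‖ ^ 2 =
      (∑ k ∈ Finset.range (M + 1), v k * v (k + 1) * ‖w (k + 1) - w k‖ ^ 2)
      + ∑ k ∈ Finset.range (M + 1), (g (k + 1) + al k) := by
    rw [← Finset.sum_add_distrib]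
    apply Finset.sum_congr rfl
    intro k hk
    rw [Finset.mem_range] at hk
    rw [hterm k hk]
    simp only [hg, hal, Nat.add_sub_cancel]
  have hsum2 : ∑ k ∈ Finset.range (M + 1), g (k + 1) =
      ∑ k ∈ Finset.range (M + 1), g k := by
    have h1 := Finset.sum_range_succ' g (M + 1)
    have h2 := Finset.sum_range_succ g (M + 1)
    rw [h2] at h1
    rw [hgN, hg0] at h1
    linarith
  have hsum3 : ∑ k ∈ Finset.range (M + 1), (g k + al k) =
      lam * ∑ k ∈ Finset.Ioo 0 (M + 1), ‖u k‖ ^ 2 := by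
    rw [Finset.sum_range_succ' (fun k => g k + al k) M]
    simp only [hg0, hal0, add_zero]
    rw [show Finset.Ioo 0 (M + 1) = Finset.Ico (Nat.succ 0) (M + 1) from (Finset.Ico_add_one_left_eq_Ioo 0 (M + 1)).symm, Finset.sum_Ico_eq_sum_range]
    simp only [Nat.add_sub_cancel]
    rw [Finset.mul_sum]
    apply Finset.sum_congr rfl
    intro k hk
    rw [Finset.mem_range] at hk
    have hk1 : 1 ≤ k + 1 := by omega
    have hkN : k + 1 < M + 1 := by omega
    have he := heig (k + 1) hk1
    simp only [Nat.add_sub_cancel] at he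
    have hun : ‖u (k + 1)‖ ^ 2 = v (k + 1) ^ 2 * ‖w (k + 1)‖ ^ 2 := by
      rw [huw (k + 1) (by omega), norm_smul, Real.norm_eq_abs,
        abs_of_nonneg (hvnonneg (k + 1) (by omega))]
      ring
    simp only [hg, hal, Nat.add_sub_cancel]
    have h1k : Nat.succ 0 + k = k + 1 := by omega
    rw [h1k, hun]
    linear_combination (-(v (k + 1) * ‖w (k + 1)‖ ^ 2)) * he
  have hP : 0 ≤ ∑ k ∈ Finset.range (M + 1), v k * v (k + 1) * ‖w (k + 1) - w k‖ ^ 2 := by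
    apply Finset.sum_nonneg
    intro k hk
    rw [Finset.mem_range] at hk
    have := hvnonneg k (by omega)
    have := hvnonneg (k + 1) (by omega)
    positivity
  calc lam * ∑ k ∈ Finset.Ioo 0 (M + 1), ‖u k‖ ^ 2
      = ∑ k ∈ Finset.range (M + 1), (g k + al k) := hsum3.symm
    _ = ∑ k ∈ Finset.range (M + 1), (g (k + 1) + al k) := by
        rw [Finset.sum_add_distrib, Finset.sum_add_distrib, hsum2]
    _ ≤ ∑ k ∈ Finset.range (M + 1), ‖u (k + 1) - u k‖ ^ 2 := by
        rw [hsum1]; linarith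

/-- Discrete Poincaré inequality with Dirichlet boundary conditions on the grid
`{0, h, …, Nh}`, together with the uniform lower bound `(sin x / x)² ≥ 2/5`. -/
theorem discrete_poincare {d : ℕ} (T : ℝ) (N : ℕ) (h : ℝ)
    (hT : 0 < T) (hN : 0 < N) (hh : h = T / N)
    (u : ℕ → EuclideanSpace ℝ (Fin d)) (hu0 : u 0 = 0) (huN : u N = 0) :
    (π^2 / T^2) * (Real.sin (π / (2 * N)) / (π / (2 * N)))^2 *
        ∑ k ∈ Finset.Ioo 0 N, h * ‖u k‖^2 ≤
      (1 / h) * ∑ k ∈ Finset.range N, ‖u (k+1) - u k‖^2 ∧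
    (2 * π^2 / (5 * T^2)) * ∑ k ∈ Finset.Ioo 0 N, h * ‖u k‖^2 ≤
      (π^2 / T^2) * (Real.sin (π / (2 * N)) / (π / (2 * N)))^2 *
        ∑ k ∈ Finset.Ioo 0 N, h * ‖u k‖^2 := by
  have hNR : (0:ℝ) < N := by exact_mod_cast hN
  have hhpos : 0 < h := by rw [hh]; positivity
  set x : ℝ := π / (2 * N) with hx
  have hxpos : 0 < x := by rw [hx]; positivity
  have hxle : x ≤ π / 2 := by
    rw [hx]
    apply div_le_div_of_nonneg_left Real.pi_pos.le (by norm_num)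
    have h1 : (1:ℝ) ≤ N := by exact_mod_cast hN
    linarith
  set S : ℝ := ∑ k ∈ Finset.Ioo 0 N, ‖u k‖ ^ 2 with hS
  set D : ℝ := ∑ k ∈ Finset.range N, ‖u (k + 1) - u k‖ ^ 2 with hD
  have hSnn : 0 ≤ S := Finset.sum_nonneg fun k _ => by positivity
  have hkey : 4 * Real.sin x ^ 2 * S ≤ D := key_spectral N hN u hu0 huN
  have hsum : ∑ k ∈ Finset.Ioo 0 N, h * ‖u k‖ ^ 2 = h * S := by
    rw [hS, Finset.mul_sum]
  constructor
  · rw [hsum]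
    have e1 : (π^2 / T^2) * (Real.sin x / x)^2 * (h * S) =
        ((N:ℝ) / T) * (4 * Real.sin x ^ 2 * S) := by
      rw [hx, hh]
      field_simp
      ring
    have e2 : (1 / h) * D = ((N:ℝ) / T) * D := by
      rw [hh]
      field_simp
    rw [e1, e2]
    apply mul_le_mul_of_nonneg_left hkey (by positivity)
  · rw [hsum]
    have hconst : 2 / 5 ≤ (Real.sin x / x) ^ 2 := by
      have hj : 2 / π * x ≤ Real.sin x := Real.mul_le_sin hxpos.le hxle
      have h2pi : 2 / π ≤ Real.sin x / x := by
        rw [le_div_iff₀ hxpos]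
        linarith
      have hpi1 : π < 3.15 := Real.pi_lt_d2
      have hpi2 : 3 < π := Real.pi_gt_three
      have h25 : (2:ℝ) / 5 ≤ (2 / π) ^ 2 := by
        rw [div_pow, le_div_iff₀ (by positivity)]
        nlinarith
      refine h25.trans (pow_le_pow_left₀ (by positivity) h2pi 2)
    have hhS : 0 ≤ h * S := by positivity
    calc 2 * π^2 / (5 * T^2) * (h * S)
        = (π^2 / T^2) * (2/5) * (h * S) := by ring
      _ ≤ (π^2 / T^2) * (Real.sin x / x)^2 * (h * S) := by
          apply mul_le_mul_of_nonneg_right _ hhS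
          apply mul_le_mul_of_nonneg_left hconst (by positivity)
end

section
/- Let U ∈ C²(ℝ^d) with ‖D²U‖ ≤ L, and let (q̃_t, ṽ_t)(x,v) be the continuous-time interpolation of velocity Verlet with step h and duration T, satisfying L(T² + Th) ≤ 1/6 and T/h ∈ ℕ. Then for all x, y, u, v ∈ ℝ^d: max_{s ≤ T} ‖q̃_s(x,u) − q̃_s(y,v)‖ ≤ (1 + L(T² + Th)) max(‖x − y‖, ‖x − y + T(u − v)‖). -/
open MeasureTheory intervalIntegral

lemma aux_int {E : Type*} [NormedAddCommGroup E] [NormedSpace ℝ E] [MeasurableSpace E]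
    [BorelSpace E] [SecondCountableTopology E]
    (G : ℤ → ℝ → E) (hG : ∀ k, Measurable fun s => G k s)
    (ι : ℝ → ℤ) (hι : Measurable ι) (a b C : ℝ)
    (hbd : ∀ s ∈ Set.uIcc a b, ‖G (ι s) s‖ ≤ C) :
    IntervalIntegrable (fun s => G (ι s) s) volume a b := by
  have hm : Measurable fun s => G (ι s) s := by
    have : Measurable fun p : ℝ × ℤ => G p.2 p.1 :=
      measurable_from_prod_countable_left fun k => hG k
    exact this.comp (measurable_id.prodMk hι)
  rw [intervalIntegrable_iff]
  refine Integrable.mono' (g := fun _ => C) (integrableOn_const measure_Ioc_lt_top.ne)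
    hm.aestronglyMeasurable ?_
  refine ae_restrict_of_forall_mem measurableSet_uIoc fun s hs => ?_
  exact hbd s (Set.uIoc_subset_uIcc hs)

lemma grid_sup_bound {E : Type*} [SeminormedAddCommGroup E] (f : ℤ → E) (N : ℕ) :
    ∃ C : ℝ, 0 ≤ C ∧ ∀ j : ℤ, 0 ≤ j → j ≤ N → ‖f j‖ ≤ C := by
  refine ⟨(Finset.range (N+1)).sup' ⟨0, by simp⟩ (fun k : ℕ => ‖f k‖), ?_, ?_⟩
  · exact le_trans (norm_nonneg (f 0)) (by
      simpa using Finset.le_sup' (fun k : ℕ => ‖f (k:ℤ)‖) (Finset.mem_range.2 (Nat.succ_pos N)))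
  · intro j hj0 hjN
    have h1 : j.toNat ∈ Finset.range (N+1) := by
      rw [Finset.mem_range]; omega
    have := Finset.le_sup' (fun k : ℕ => ‖f (k:ℤ)‖) h1
    simpa [Int.toNat_of_nonneg hj0] using this

lemma seg_max_bound {E : Type*} [NormedAddCommGroup E] [NormedSpace ℝ E]
    (p q : E) (T t : ℝ) (hT : 0 < T) (ht0 : 0 ≤ t) (htT : t ≤ T) :
    ‖p + t • q‖ ≤ max ‖p‖ ‖p + T • q‖ := by
  obtain ⟨θ, hθT, hθ0, hθ1⟩ : ∃ θ : ℝ, θ * T = t ∧ 0 ≤ θ ∧ θ ≤ 1 :=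
    ⟨t / T, div_mul_cancel₀ t hT.ne', div_nonneg ht0 hT.le, (div_le_one hT).2 htT⟩
  have hid : p + t • q = (1 - θ) • p + θ • (p + T • q) := by
    rw [← hθT]; module
  rw [hid]
  calc ‖(1 - θ) • p + θ • (p + T • q)‖
      ≤ (1 - θ) * ‖p‖ + θ * ‖p + T • q‖ := by
        refine le_trans (norm_add_le _ _) ?_
        rw [norm_smul, norm_smul, Real.norm_eq_abs, Real.norm_eq_abs,
          abs_of_nonneg (by linarith), abs_of_nonneg hθ0]
    _ ≤ (1 - θ) * max ‖p‖ ‖p + T • q‖ + θ * max ‖p‖ ‖p + T • q‖ := by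
        gcongr
        · exact le_max_left _ _
        · exact le_max_right _ _
    _ = max ‖p‖ ‖p + T • q‖ := by ring

set_option maxHeartbeats 1000000 in
/-- A priori stability estimate for the velocity Verlet interpolation
(Lemma `apriori`, inequality (apriori:3)). The flows `q x v` and `w x v` are the
continuous-time interpolations of positions and velocities of velocity Verlet
with step size `h`, started at `(x, v)`. -/
theorem verlet_apriori_stability {d : ℕ}
    (U : EuclideanSpace ℝ (Fin d) → ℝ)
    (gradU : EuclideanSpace ℝ (Fin d) → EuclideanSpace ℝ (Fin d))
    (hess : EuclideanSpace ℝ (Fin d) →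
      (EuclideanSpace ℝ (Fin d) →L[ℝ] EuclideanSpace ℝ (Fin d)))
    (L T h : ℝ) (N : ℕ)
    (hgrad : ∀ x, HasFDerivAt U ((innerSL ℝ) (gradU x)) x)
    (hhess : ∀ x, HasFDerivAt gradU (hess x) x)
    (hL : ∀ x, ‖hess x‖ ≤ L)
    (hT : 0 < T) (hh : 0 < h) (hN : 0 < N) (hTh : T = N * h)
    (hsmall : L * (T^2 + T * h) ≤ 1/6)
    (q w : EuclideanSpace ℝ (Fin d) → EuclideanSpace ℝ (Fin d) → ℝ →
      EuclideanSpace ℝ (Fin d))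
    (hq : ∀ x v t, q x v t = x + ∫ s in (0:ℝ)..t,
      (w x v (gridFloor h s) - (s - gridFloor h s) • gradU (q x v (gridFloor h s))))
    (hw : ∀ x v t, w x v t = v - (1/2 : ℝ) • ∫ s in (0:ℝ)..t,
      (gradU (q x v (gridFloor h s)) + gradU (q x v (gridCeil h s))))
    (x y u v : EuclideanSpace ℝ (Fin d)) :
    ∀ s ∈ Set.Icc (0:ℝ) T,
      ‖q x u s - q y v s‖ ≤
        (1 + L * (T^2 + T * h)) * max ‖x - y‖ ‖x - y + T • (u - v)‖ := by
  simp only [gridFloor, gridCeil] at hq hw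
  have hL0 : 0 ≤ L := le_trans (norm_nonneg _) (hL 0)
  have hN1 : (1:ℝ) ≤ N := by exact_mod_cast hN
  have hhT : h ≤ T := by rw [hTh]; nlinarith
  have Lip : ∀ a b, ‖gradU a - gradU b‖ ≤ L * ‖a - b‖ := fun a b =>
    convex_univ.norm_image_sub_le_of_norm_hasFDerivWithin_le
      (fun z _ => (hhess z).hasFDerivWithinAt) (fun z _ => hL z)
      (Set.mem_univ b) (Set.mem_univ a)
  set Q : ℝ → EuclideanSpace ℝ (Fin d) := fun t => q x u t - q y v t with hQ
  set W : ℝ → EuclideanSpace ℝ (Fin d) := fun t => w x u t - w y v t with hW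
  set mx := max ‖x - y‖ ‖x - y + T • (u - v)‖ with hmx
  have hmx0 : 0 ≤ mx := le_trans (norm_nonneg _) (le_max_left _ _)
  set M := (Finset.range (N+1)).sup' ⟨0, by simp⟩ (fun k : ℕ => ‖Q ((k:ℝ) * h)‖) with hM
  have hM0 : 0 ≤ M :=
    le_trans (norm_nonneg _) (Finset.le_sup' (fun k : ℕ => ‖Q ((k:ℝ) * h)‖)
      (Finset.mem_range.2 (Nat.succ_pos N)))
  have hQM : ∀ j : ℤ, 0 ≤ j → j ≤ (N:ℤ) → ‖Q (h * j)‖ ≤ M := by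
    intro j hj0 hjN
    have h1 : j.toNat ∈ Finset.range (N+1) := by rw [Finset.mem_range]; omega
    have h2 := Finset.le_sup' (fun k : ℕ => ‖Q ((k:ℝ) * h)‖) h1
    have h3 : ((j.toNat : ℕ) : ℝ) * h = h * j := by
      rw [mul_comm]
      congr 1
      exact_mod_cast congrArg (fun z : ℤ => (z : ℝ)) (Int.toNat_of_nonneg hj0)
    rwa [h3] at h2
  set D := L * M with hD
  have hD0 : 0 ≤ D := mul_nonneg hL0 hM0
  have hδg : ∀ j : ℤ, 0 ≤ j → j ≤ (N:ℤ) →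
      ‖gradU (q x u (h * j)) - gradU (q y v (h * j))‖ ≤ D := by
    intro j hj0 hjN
    calc ‖gradU (q x u (h * j)) - gradU (q y v (h * j))‖
        ≤ L * ‖q x u (h * j) - q y v (h * j)‖ := Lip _ _
      _ ≤ L * M := mul_le_mul_of_nonneg_left (hQM j hj0 hjN) hL0
  -- floor/ceil facts
  have hTN : T / h = (N:ℝ) := by rw [hTh]; field_simp
  have hfloor0 : ∀ s : ℝ, 0 ≤ s → 0 ≤ ⌊s / h⌋ :=
    fun s hs => Int.floor_nonneg.2 (div_nonneg hs hh.le)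
  have hfloorN : ∀ s : ℝ, s ≤ T → ⌊s / h⌋ ≤ (N:ℤ) := by
    intro s hsT
    have h1 : s / h ≤ (N:ℝ) := by rw [← hTN]; exact div_le_div_of_nonneg_right hsT hh.le
    calc ⌊s / h⌋ ≤ ⌊(N:ℝ)⌋ := Int.floor_le_floor h1
      _ = (N:ℤ) := Int.floor_natCast N
  have hceil0 : ∀ s : ℝ, 0 ≤ s → 0 ≤ ⌈s / h⌉ :=
    fun s hs => Int.ceil_nonneg (div_nonneg hs hh.le)
  have hceilN : ∀ s : ℝ, s ≤ T → ⌈s / h⌉ ≤ (N:ℤ) := by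
    intro s hsT
    refine Int.ceil_le.2 ?_
    rw [Int.cast_natCast, ← hTN]
    exact div_le_div_of_nonneg_right hsT hh.le
  have hfloor_le : ∀ s : ℝ, h * (⌊s / h⌋ : ℝ) ≤ s := by
    intro s
    have := Int.floor_le (s / h)
    calc h * (⌊s / h⌋ : ℝ) ≤ h * (s / h) := mul_le_mul_of_nonneg_left this hh.le
      _ = s := by field_simp
  have hfloor_gt : ∀ s : ℝ, s < h * (⌊s / h⌋ : ℝ) + h := by
    intro s
    have := Int.lt_floor_add_one (s / h)
    have h2 : s / h * h < ((⌊s / h⌋ : ℝ) + 1) * h := by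
      exact mul_lt_mul_of_pos_right this hh
    rw [div_mul_cancel₀ _ hh.ne'] at h2
    nlinarith
  -- integrability
  have hιm : Measurable fun s : ℝ => ⌊s / h⌋ :=
    Int.measurable_floor.comp (measurable_id.div_const h)
  have hιm' : Measurable fun s : ℝ => ⌈s / h⌉ :=
    Int.measurable_ceil.comp (measurable_id.div_const h)
  have hIfloor : ∀ (φ : ℝ → EuclideanSpace ℝ (Fin d)) (a b : ℝ), 0 ≤ a → a ≤ b → b ≤ T →
      IntervalIntegrable (fun s => φ (h * (⌊s / h⌋ : ℝ))) volume a b := by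
    intro φ a b ha hab hbT
    obtain ⟨C, hC0, hC⟩ := grid_sup_bound (fun j : ℤ => φ (h * j)) N
    refine aux_int (fun (k : ℤ) (_ : ℝ) => φ (h * k)) (fun k => measurable_const)
      (fun s => ⌊s / h⌋) hιm a b C ?_
    intro s hs
    rw [Set.uIcc_of_le hab] at hs
    exact hC _ (hfloor0 s (ha.trans hs.1)) (hfloorN s (hs.2.trans hbT))
  have hIceil : ∀ (φ : ℝ → EuclideanSpace ℝ (Fin d)) (a b : ℝ), 0 ≤ a → a ≤ b → b ≤ T →
      IntervalIntegrable (fun s => φ (h * (⌈s / h⌉ : ℝ))) volume a b := by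
    intro φ a b ha hab hbT
    obtain ⟨C, hC0, hC⟩ := grid_sup_bound (fun j : ℤ => φ (h * j)) N
    refine aux_int (fun (k : ℤ) (_ : ℝ) => φ (h * k)) (fun k => measurable_const)
      (fun s => ⌈s / h⌉) hιm' a b C ?_
    intro s hs
    rw [Set.uIcc_of_le hab] at hs
    exact hC _ (hceil0 s (ha.trans hs.1)) (hceilN s (hs.2.trans hbT))
  have hI1 : ∀ (w' φ : ℝ → EuclideanSpace ℝ (Fin d)) (a b : ℝ), 0 ≤ a → a ≤ b → b ≤ T →
      IntervalIntegrable
        (fun s => w' (h * (⌊s / h⌋ : ℝ)) - (s - h * (⌊s / h⌋ : ℝ)) • φ (h * (⌊s / h⌋ : ℝ)))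
        volume a b := by
    intro w' φ a b ha hab hbT
    obtain ⟨C1, hC10, hC1⟩ := grid_sup_bound (fun j : ℤ => w' (h * j)) N
    obtain ⟨C2, hC20, hC2⟩ := grid_sup_bound (fun j : ℤ => φ (h * j)) N
    refine aux_int (fun (k : ℤ) (s : ℝ) => w' (h * k) - (s - h * k) • φ (h * k))
      (fun k => measurable_const.sub ((measurable_id.sub_const _).smul_const _))
      (fun s => ⌊s / h⌋) hιm a b (C1 + h * C2) ?_
    intro s hs
    rw [Set.uIcc_of_le hab] at hs
    have hs0 : 0 ≤ s := ha.trans hs.1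
    have hsT : s ≤ T := hs.2.trans hbT
    have hj0 := hfloor0 s hs0
    have hjN := hfloorN s hsT
    have h1 : h * (⌊s / h⌋ : ℝ) ≤ s := hfloor_le s
    have h2 : s < h * (⌊s / h⌋ : ℝ) + h := hfloor_gt s
    calc ‖w' (h * (⌊s / h⌋ : ℝ)) - (s - h * (⌊s / h⌋ : ℝ)) • φ (h * (⌊s / h⌋ : ℝ))‖
        ≤ ‖w' (h * (⌊s / h⌋ : ℝ))‖ + ‖(s - h * (⌊s / h⌋ : ℝ)) • φ (h * (⌊s / h⌋ : ℝ))‖ :=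
          norm_sub_le _ _
      _ ≤ C1 + h * C2 := by
          refine add_le_add (hC1 _ hj0 hjN) ?_
          rw [norm_smul, Real.norm_eq_abs, abs_of_nonneg (by linarith)]
          exact mul_le_mul (by linarith) (hC2 _ hj0 hjN) (norm_nonneg _) hh.le
  -- bound on velocity differences at grid points
  have hWgrid : ∀ j : ℤ, 0 ≤ j → j ≤ (N:ℤ) →
      ‖W (h * j) - (u - v)‖ ≤ D * (h * j) := by
    intro j hj0 hjN
    have hj0' : (0:ℝ) ≤ h * j := mul_nonneg hh.le (by exact_mod_cast hj0)
    have hjT : h * (j:ℝ) ≤ T := by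
      rw [hTh]
      have : (j:ℝ) ≤ (N:ℝ) := by exact_mod_cast hjN
      nlinarith
    have hint1 : IntervalIntegrable
        (fun s => gradU (q x u (h * (⌊s / h⌋ : ℝ))) + gradU (q x u (h * (⌈s / h⌉ : ℝ))))
        volume 0 (h * j) :=
      (hIfloor (fun r => gradU (q x u r)) 0 (h * j) le_rfl hj0' hjT).add
        (hIceil (fun r => gradU (q x u r)) 0 (h * j) le_rfl hj0' hjT)
    have hint2 : IntervalIntegrable
        (fun s => gradU (q y v (h * (⌊s / h⌋ : ℝ))) + gradU (q y v (h * (⌈s / h⌉ : ℝ))))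
        volume 0 (h * j) :=
      (hIfloor (fun r => gradU (q y v r)) 0 (h * j) le_rfl hj0' hjT).add
        (hIceil (fun r => gradU (q y v r)) 0 (h * j) le_rfl hj0' hjT)
    have hWeq : W (h * j) - (u - v) = -((1/2 : ℝ) •
        ((∫ s in (0:ℝ)..(h * j),
          (gradU (q x u (h * (⌊s / h⌋ : ℝ))) + gradU (q x u (h * (⌈s / h⌉ : ℝ))))) -
         (∫ s in (0:ℝ)..(h * j),
          (gradU (q y v (h * (⌊s / h⌋ : ℝ))) + gradU (q y v (h * (⌈s / h⌉ : ℝ))))))) := by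
      simp only [hW]
      rw [hw x u (h * j), hw y v (h * j), smul_sub]
      abel
    rw [hWeq, norm_neg, norm_smul, ← integral_sub hint1 hint2]
    have hbound : ∀ s ∈ Set.uIoc (0:ℝ) (h * j),
        ‖(gradU (q x u (h * (⌊s / h⌋ : ℝ))) + gradU (q x u (h * (⌈s / h⌉ : ℝ)))) -
         (gradU (q y v (h * (⌊s / h⌋ : ℝ))) + gradU (q y v (h * (⌈s / h⌉ : ℝ))))‖ ≤ 2 * D := by
      intro s hs
      rw [Set.uIoc_of_le hj0'] at hs
      have hs0 : 0 ≤ s := hs.1.le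
      have hsT : s ≤ T := hs.2.trans hjT
      have heq : (gradU (q x u (h * (⌊s / h⌋ : ℝ))) + gradU (q x u (h * (⌈s / h⌉ : ℝ)))) -
          (gradU (q y v (h * (⌊s / h⌋ : ℝ))) + gradU (q y v (h * (⌈s / h⌉ : ℝ)))) =
          (gradU (q x u (h * (⌊s / h⌋ : ℝ))) - gradU (q y v (h * (⌊s / h⌋ : ℝ)))) +
          (gradU (q x u (h * (⌈s / h⌉ : ℝ))) - gradU (q y v (h * (⌈s / h⌉ : ℝ)))) := by abel
      rw [heq]
      calc ‖_ + _‖ ≤ _ + _ := norm_add_le _ _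
        _ ≤ D + D := add_le_add (hδg _ (hfloor0 s hs0) (hfloorN s hsT))
            (hδg _ (hceil0 s hs0) (hceilN s hsT))
        _ = 2 * D := by ring
    have := norm_integral_le_of_norm_le_const hbound
    rw [sub_zero, abs_of_nonneg hj0'] at this
    rw [Real.norm_eq_abs]
    calc |1/2| * ‖∫ s in (0:ℝ)..(h * j), _‖ ≤ |1/2| * (2 * D * (h * j)) := by
          exact mul_le_mul_of_nonneg_left this (abs_nonneg _)
      _ = D * (h * j) := by rw [abs_of_nonneg (by norm_num : (0:ℝ) ≤ 1/2)]; ring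
  -- key estimate
  have key : ∀ t : ℝ, 0 ≤ t → t ≤ T →
      ‖Q t - ((x - y) + t • (u - v))‖ ≤ D * (T^2/2 + T*h) := by
    intro t ht0 htT
    set n := ⌊t / h⌋.toNat with hn
    have hfl : (⌊t / h⌋ : ℤ) = (n : ℤ) := (Int.toNat_of_nonneg (hfloor0 t ht0)).symm
    have hflR : ((⌊t / h⌋ : ℤ) : ℝ) = (n : ℝ) := by exact_mod_cast congrArg (fun z : ℤ => (z:ℝ)) hfl
    have hnh_le : (n:ℝ) * h ≤ t := by
      have := hfloor_le t; rw [hflR] at this; linarith [this]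
    have hlt : t < ((n:ℝ) + 1) * h := by
      have := hfloor_gt t; rw [hflR] at this; nlinarith
    have hnN : n ≤ N := by
      have := hfloorN t htT; omega
    set a : ℕ → ℝ := fun k => min ((k:ℝ) * h) t with ha
    have ha0 : a 0 = 0 := by simp [ha, ht0]
    have halast : a (n+1) = t := by
      simp only [ha]
      refine min_eq_right ?_
      push_cast
      linarith
    have hak : ∀ k, k ≤ n → a k = (k:ℝ) * h := by
      intro k hk
      refine min_eq_left ?_
      have : (k:ℝ) ≤ (n:ℝ) := by exact_mod_cast hk
      nlinarith
    have hamono : ∀ k, a k ≤ a (k+1) := by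
      intro k
      refine min_le_min ?_ le_rfl
      have : (k:ℝ) ≤ (k:ℝ) + 1 := by linarith
      push_cast
      nlinarith
    have ha_nonneg : ∀ k, 0 ≤ a k := by
      intro k
      exact le_min (mul_nonneg (Nat.cast_nonneg k) hh.le) ht0
    have ha_le_t : ∀ k, a k ≤ t := fun k => min_le_right _ _
    -- integral representation
    have hint1 : IntervalIntegrable
        (fun s => w x u (h * (⌊s / h⌋ : ℝ)) -
          (s - h * (⌊s / h⌋ : ℝ)) • gradU (q x u (h * (⌊s / h⌋ : ℝ)))) volume 0 t :=
      hI1 (w x u) (fun r => gradU (q x u r)) 0 t le_rfl ht0 htT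
    have hint2 : IntervalIntegrable
        (fun s => w y v (h * (⌊s / h⌋ : ℝ)) -
          (s - h * (⌊s / h⌋ : ℝ)) • gradU (q y v (h * (⌊s / h⌋ : ℝ)))) volume 0 t :=
      hI1 (w y v) (fun r => gradU (q y v r)) 0 t le_rfl ht0 htT
    have hQG : Q t - ((x - y) + t • (u - v)) = ∫ s in (0:ℝ)..t,
        ((w x u (h * (⌊s / h⌋ : ℝ)) -
          (s - h * (⌊s / h⌋ : ℝ)) • gradU (q x u (h * (⌊s / h⌋ : ℝ)))) -
         (w y v (h * (⌊s / h⌋ : ℝ)) -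
          (s - h * (⌊s / h⌋ : ℝ)) • gradU (q y v (h * (⌊s / h⌋ : ℝ)))) -
         (u - v)) := by
      rw [integral_sub (hint1.sub hint2) intervalIntegrable_const,
        integral_sub hint1 hint2, intervalIntegral.integral_const]
      simp only [hQ]
      rw [hq x u t, hq y v t, sub_zero]
      abel
    set FF : ℝ → EuclideanSpace ℝ (Fin d) := fun s =>
        ((w x u (h * (⌊s / h⌋ : ℝ)) -
          (s - h * (⌊s / h⌋ : ℝ)) • gradU (q x u (h * (⌊s / h⌋ : ℝ)))) -
         (w y v (h * (⌊s / h⌋ : ℝ)) -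
          (s - h * (⌊s / h⌋ : ℝ)) • gradU (q y v (h * (⌊s / h⌋ : ℝ)))) -
         (u - v)) with hFF
    have hpiece_int : ∀ k, k < n + 1 → IntervalIntegrable FF volume (a k) (a (k+1)) := by
      intro k hk
      exact ((hI1 (w x u) (fun r => gradU (q x u r)) (a k) (a (k+1)) (ha_nonneg k)
          (hamono k) ((ha_le_t (k+1)).trans htT)).sub
        (hI1 (w y v) (fun r => gradU (q y v r)) (a k) (a (k+1)) (ha_nonneg k)
          (hamono k) ((ha_le_t (k+1)).trans htT))).sub intervalIntegrable_const
    have hsum := sum_integral_adjacent_intervals (f := FF) (μ := volume) (a := a)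
      (n := n + 1) hpiece_int
    rw [ha0, halast] at hsum
    have hpiece_int2 : ∀ k : ℕ, k < n + 1 →
        IntervalIntegrable (fun s : ℝ => s + h) volume (a k) (a (k+1)) :=
      fun k _ => (continuous_id.add continuous_const).intervalIntegrable _ _
    have hsum2 := sum_integral_adjacent_intervals (f := fun s : ℝ => s + h) (μ := volume)
      (a := a) (n := n + 1) hpiece_int2
    rw [ha0, halast] at hsum2
    have hval2 : (∫ s in (0:ℝ)..t, (s + h)) = t^2/2 + t*h := by
      rw [integral_add intervalIntegrable_id intervalIntegrable_const, integral_id,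
        intervalIntegral.integral_const, smul_eq_mul]
      ring
    have hpt : ∀ k ∈ Finset.range (n+1),
        ‖∫ s in a k..a (k+1), FF s‖ ≤ D * ∫ s in a k..a (k+1), (s + h) := by
      intro k hk
      rw [Finset.mem_range] at hk
      have hkn : k ≤ n := Nat.lt_succ_iff.1 hk
      have hakk := hak k hkn
      have hb : a (k+1) ≤ a k + h := by
        have h1 : a (k+1) ≤ ((k:ℝ)+1) * h := by
          rw [ha]; push_cast; exact min_le_left _ _
        rw [hakk]; linarith
      have hptwise : ∀ s ∈ Set.uIoc (a k) (a (k+1)), ‖FF s‖ ≤ D * (a k + h) := by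
        intro s hs
        rw [Set.uIoc_of_le (hamono k)] at hs
        have hs0 : 0 ≤ s := (ha_nonneg k).trans hs.1.le
        have hsT : s ≤ T := (hs.2.trans (ha_le_t (k+1))).trans htT
        have hj0 := hfloor0 s hs0
        have hjN := hfloorN s hsT
        have h1 : h * (⌊s / h⌋ : ℝ) ≤ s := hfloor_le s
        have hFFs : FF s = (W (h * (⌊s / h⌋ : ℝ)) - (u - v)) -
            (s - h * (⌊s / h⌋ : ℝ)) •
              (gradU (q x u (h * (⌊s / h⌋ : ℝ))) - gradU (q y v (h * (⌊s / h⌋ : ℝ)))) := by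
          simp only [hFF, hW]
          rw [smul_sub]
          abel
        rw [hFFs]
        calc ‖_ - _‖ ≤ ‖W (h * (⌊s / h⌋ : ℝ)) - (u - v)‖ +
              ‖(s - h * (⌊s / h⌋ : ℝ)) •
                (gradU (q x u (h * (⌊s / h⌋ : ℝ))) - gradU (q y v (h * (⌊s / h⌋ : ℝ))))‖ :=
            norm_sub_le _ _
          _ ≤ D * (h * (⌊s / h⌋ : ℝ)) + (s - h * (⌊s / h⌋ : ℝ)) * D := by
              refine add_le_add (hWgrid _ hj0 hjN) ?_
              rw [norm_smul, Real.norm_eq_abs, abs_of_nonneg (by linarith)]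
              exact mul_le_mul_of_nonneg_left (hδg _ hj0 hjN) (by linarith)
          _ = D * s := by ring
          _ ≤ D * (a k + h) := mul_le_mul_of_nonneg_left (hs.2.trans hb) hD0
      have hstep1 := norm_integral_le_of_norm_le_const hptwise
      rw [abs_of_nonneg (sub_nonneg.2 (hamono k))] at hstep1
      refine hstep1.trans ?_
      rw [integral_add intervalIntegrable_id intervalIntegrable_const, integral_id,
        intervalIntegral.integral_const, smul_eq_mul]
      have h0ak : 0 ≤ a k := ha_nonneg k
      nlinarith [mul_nonneg hD0 (sq_nonneg (a (k+1) - a k)), hamono k]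
    rw [hQG, ← hsum]
    calc ‖∑ k ∈ Finset.range (n+1), ∫ s in a k..a (k+1), FF s‖
        ≤ ∑ k ∈ Finset.range (n+1), ‖∫ s in a k..a (k+1), FF s‖ := norm_sum_le _ _
      _ ≤ ∑ k ∈ Finset.range (n+1), D * ∫ s in a k..a (k+1), (s + h) :=
          Finset.sum_le_sum hpt
      _ = D * ∑ k ∈ Finset.range (n+1), ∫ s in a k..a (k+1), (s + h) := by
          rw [Finset.mul_sum]
      _ = D * (t^2/2 + t*h) := by rw [hsum2, hval2]
      _ ≤ D * (T^2/2 + T*h) := by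
          nlinarith [mul_nonneg hD0 (mul_nonneg (sub_nonneg.2 htT) hh.le),
            mul_nonneg hD0 (mul_nonneg (sub_nonneg.2 htT) (by linarith : (0:ℝ) ≤ T + t))]
  -- grid bound on M
  set aQ := L * (T^2/2 + T*h) with haQ
  have haQ0 : 0 ≤ aQ := by
    rw [haQ]; exact mul_nonneg hL0 (by nlinarith [sq_nonneg T, mul_pos hT hh])
  have hQbound : ∀ t : ℝ, 0 ≤ t → t ≤ T → ‖Q t‖ ≤ mx + aQ * M := by
    intro t ht0 htT
    have h1 : ‖Q t‖ ≤ ‖(x - y) + t • (u - v)‖ + ‖Q t - ((x - y) + t • (u - v))‖ := by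
      have h0 : ((x - y) + t • (u - v)) + (Q t - ((x - y) + t • (u - v))) = Q t := by abel
      have h1' := norm_add_le ((x - y) + t • (u - v)) (Q t - ((x - y) + t • (u - v)))
      rwa [h0] at h1'
    have h2 : ‖(x - y) + t • (u - v)‖ ≤ mx := seg_max_bound _ _ T t hT ht0 htT
    have h3 := key t ht0 htT
    have h4 : D * (T^2/2 + T*h) = aQ * M := by rw [hD, haQ]; ring
    rw [h4] at h3
    linarith
  have hMle : M ≤ mx + aQ * M := by
    rw [hM]
    refine Finset.sup'_le _ _ ?_
    intro k hk
    rw [Finset.mem_range] at hk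
    have hk' : k ≤ N := Nat.lt_succ_iff.1 hk
    have h1 : (0:ℝ) ≤ (k:ℝ) * h := mul_nonneg (Nat.cast_nonneg k) hh.le
    have h2 : (k:ℝ) * h ≤ T := by
      rw [hTh]
      have : (k:ℝ) ≤ (N:ℝ) := by exact_mod_cast hk'
      nlinarith
    exact hQbound _ h1 h2
  -- final arithmetic
  intro s hs
  have hQs := hQbound s hs.1 hs.2
  clear_value Q W mx M D aQ
  set A := L * (T^2 + T * h) with hA
  have hA0 : 0 ≤ A := by rw [hA]; nlinarith
  have haA : aQ ≤ A := by rw [haQ, hA]; nlinarith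
  have hA6 : A ≤ 1/6 := hsmall
  have hkey : aQ + aQ * A ≤ A := by
    have h1 : aQ * A ≤ A * A := mul_le_mul_of_nonneg_right haA hA0
    have h2 : A * A ≤ A * (1/6) := mul_le_mul_of_nonneg_left hA6 hA0
    have h3 : A - aQ = L * T^2 / 2 := by rw [hA, haQ]; ring
    have h4 : A * (1/6) ≤ L * T^2 / 2 := by
      rw [hA]
      nlinarith
    linarith
  have hfin : mx + aQ * M ≤ (1 + A) * mx := by
    have hMle' : (1 - aQ) * M ≤ mx := by nlinarith
    have hkey' : aQ ≤ A * (1 - aQ) := by nlinarith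
    have h5 : aQ * M ≤ A * ((1 - aQ) * M) := by
      calc aQ * M ≤ (A * (1 - aQ)) * M := mul_le_mul_of_nonneg_right hkey' hM0
        _ = A * ((1 - aQ) * M) := by ring
    have h6 : A * ((1 - aQ) * M) ≤ A * mx := mul_le_mul_of_nonneg_left hMle' hA0
    linarith
  have : ‖Q s‖ ≤ (1 + A) * mx := hQs.trans hfin
  simpa only [hQ, hA, hmx] using this
end

section
/- Let U ∈ C²(ℝ^d) with ‖D²U‖ ≤ L, and suppose L(T² + Th) ≤ 1/6 and T/h ∈ ℕ. Then the derivative of the Verlet flow with respect to initial velocity satisfies max_{s ≤ T} ‖D₂q̃_s(x,v)‖ ≤ (6/5)T and max_{s ≤ T} ‖D₂ṽ_s(x,v)‖ ≤ 6/5 for all x, v ∈ ℝ^d. -/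
open MeasureTheory intervalIntegral

lemma gridFloor_eq {h : ℝ} (hh : 0 < h) (k : ℕ) {u : ℝ}
    (h1 : (k:ℝ)*h < u) (h2 : u < (k:ℝ)*h + h) : gridFloor h u = (k:ℝ)*h := by
  unfold gridFloor
  have hf : ⌊u/h⌋ = (k:ℤ) := by
    rw [Int.floor_eq_iff]
    constructor
    · push_cast
      rw [le_div_iff₀ hh]
      nlinarith
    · push_cast
      rw [div_lt_iff₀ hh]
      nlinarith
  rw [hf]; push_cast; ring

lemma gridCeil_eq {h : ℝ} (hh : 0 < h) (k : ℕ) {u : ℝ}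
    (h1 : (k:ℝ)*h < u) (h2 : u < (k:ℝ)*h + h) : gridCeil h u = (k:ℝ)*h + h := by
  unfold gridCeil
  have hf : ⌈u/h⌉ = (k:ℤ) + 1 := by
    rw [Int.ceil_eq_iff]
    constructor
    · push_cast
      rw [lt_div_iff₀ hh]
      nlinarith
    · push_cast
      rw [div_le_iff₀ hh]
      nlinarith
  rw [hf]; push_cast; ring

lemma gridFloor_self {h : ℝ} (hh : 0 < h) (k : ℕ) : gridFloor h ((k:ℝ)*h) = (k:ℝ)*h := by
  unfold gridFloor
  rw [mul_div_assoc, div_self hh.ne', mul_one]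
  rw [show ((k:ℝ) : ℝ) = ((k:ℤ) : ℝ) by push_cast; ring, Int.floor_intCast]
  push_cast; ring

lemma integral_affine {F : Type*} [NormedAddCommGroup F] [NormedSpace ℝ F] [CompleteSpace F]
    (a σ : ℝ) (w0 g : F) :
    (∫ u in a..(a+σ), (w0 - (u - a) • g)) = σ • w0 - (σ^2/2) • g := by
  have hcont : Continuous fun u : ℝ => (u - a) • g := by fun_prop
  rw [intervalIntegral.integral_sub intervalIntegrable_const (hcont.intervalIntegrable _ _)]
  rw [intervalIntegral.integral_const, intervalIntegral.integral_smul_const]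
  have : (∫ u in a..(a+σ), (u - a)) = σ^2/2 := by
    rw [intervalIntegral.integral_comp_sub_right (fun x => x) a]
    simp [integral_id]
  rw [this]
  congr 1
  ring

set_option maxHeartbeats 1600000 in
/-- A priori bounds for the derivative of the velocity Verlet flow with respect
to the initial velocity (Lemma `apriori2`, inequalities (apriori:5)–(apriori:6)). -/
theorem verlet_velocity_derivative_bounds {d : ℕ}
    (U : EuclideanSpace ℝ (Fin d) → ℝ)
    (gradU : EuclideanSpace ℝ (Fin d) → EuclideanSpace ℝ (Fin d))
    (hess : EuclideanSpace ℝ (Fin d) →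
      (EuclideanSpace ℝ (Fin d) →L[ℝ] EuclideanSpace ℝ (Fin d)))
    (L T h : ℝ) (N : ℕ)
    (hgrad : ∀ x, HasFDerivAt U ((innerSL ℝ) (gradU x)) x)
    (hhess : ∀ x, HasFDerivAt gradU (hess x) x)
    (hL : ∀ x, ‖hess x‖ ≤ L)
    (hT : 0 < T) (hh : 0 < h) (hN : 0 < N) (hTh : T = N * h)
    (hsmall : L * (T^2 + T * h) ≤ 1/6)
    (q w : EuclideanSpace ℝ (Fin d) → EuclideanSpace ℝ (Fin d) → ℝ →
      EuclideanSpace ℝ (Fin d))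
    (hq : ∀ x v t, q x v t = x + ∫ s in (0:ℝ)..t,
      (w x v (gridFloor h s) - (s - gridFloor h s) • gradU (q x v (gridFloor h s))))
    (hw : ∀ x v t, w x v t = v - (1/2 : ℝ) • ∫ s in (0:ℝ)..t,
      (gradU (q x v (gridFloor h s)) + gradU (q x v (gridCeil h s))))
    (Dq Dw : EuclideanSpace ℝ (Fin d) → EuclideanSpace ℝ (Fin d) → ℝ →
      (EuclideanSpace ℝ (Fin d) →L[ℝ] EuclideanSpace ℝ (Fin d)))
    (hDq : ∀ x v t, HasFDerivAt (fun v' => q x v' t) (Dq x v t) v)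
    (hDw : ∀ x v t, HasFDerivAt (fun v' => w x v' t) (Dw x v t) v)
    (x v : EuclideanSpace ℝ (Fin d)) :
    (∀ s ∈ Set.Icc (0:ℝ) T, ‖Dq x v s‖ ≤ (6/5) * T) ∧
      (∀ s ∈ Set.Icc (0:ℝ) T, ‖Dw x v s‖ ≤ 6/5) := by
  have hL0 : 0 ≤ L := le_trans (norm_nonneg _) (hL 0)
  -- a.e. identification of the position integrand on a grid cell
  have aeI : ∀ (v' : EuclideanSpace ℝ (Fin d)) (k : ℕ) (σ : ℝ), 0 ≤ σ → σ ≤ h →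
      ∀ᵐ u ∂(volume : Measure ℝ), u ∈ Set.Ioc ((k:ℝ)*h) ((k:ℝ)*h + σ) →
        (w x v' (gridFloor h u) - (u - gridFloor h u) • gradU (q x v' (gridFloor h u)))
          = w x v' ((k:ℝ)*h) - (u - (k:ℝ)*h) • gradU (q x v' ((k:ℝ)*h)) := by
    intro v' k σ hσ0 hσh
    rw [ae_iff]
    refine measure_mono_null ?_ (measure_singleton ((k:ℝ)*h + h))
    intro u hu
    simp only [Set.mem_setOf_eq] at hu
    push_neg at hu
    obtain ⟨hu1, hu2⟩ := hu
    rw [Set.mem_singleton_iff]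
    by_contra hne
    have h1 : (k:ℝ)*h < u := hu1.1
    have h2 : u < (k:ℝ)*h + h := lt_of_le_of_ne (le_trans hu1.2 (by linarith)) hne
    exact hu2 (by rw [gridFloor_eq hh k h1 h2])
  -- a.e. identification of the velocity integrand on a grid cell
  have aeJ : ∀ (v' : EuclideanSpace ℝ (Fin d)) (k : ℕ) (σ : ℝ), 0 ≤ σ → σ ≤ h →
      ∀ᵐ u ∂(volume : Measure ℝ), u ∈ Set.Ioc ((k:ℝ)*h) ((k:ℝ)*h + σ) →
        (gradU (q x v' (gridFloor h u)) + gradU (q x v' (gridCeil h u)))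
          = gradU (q x v' ((k:ℝ)*h)) + gradU (q x v' ((k:ℝ)*h + h)) := by
    intro v' k σ hσ0 hσh
    rw [ae_iff]
    refine measure_mono_null ?_ (measure_singleton ((k:ℝ)*h + h))
    intro u hu
    simp only [Set.mem_setOf_eq] at hu
    push_neg at hu
    obtain ⟨hu1, hu2⟩ := hu
    rw [Set.mem_singleton_iff]
    by_contra hne
    have h1 : (k:ℝ)*h < u := hu1.1
    have h2 : u < (k:ℝ)*h + h := lt_of_le_of_ne (le_trans hu1.2 (by linarith)) hne
    exact hu2 (by rw [gridFloor_eq hh k h1 h2, gridCeil_eq hh k h1 h2])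
  -- integrability on a single cell
  have intIcell : ∀ (v' : EuclideanSpace ℝ (Fin d)) (k : ℕ) (σ : ℝ), 0 ≤ σ → σ ≤ h →
      IntervalIntegrable (fun u => w x v' (gridFloor h u)
        - (u - gridFloor h u) • gradU (q x v' (gridFloor h u))) volume
        ((k:ℝ)*h) ((k:ℝ)*h + σ) := by
    intro v' k σ hσ0 hσh
    have hcont : Continuous fun u : ℝ =>
        w x v' ((k:ℝ)*h) - (u - (k:ℝ)*h) • gradU (q x v' ((k:ℝ)*h)) := by fun_prop
    refine (hcont.intervalIntegrable _ _).congr_ae ?_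
    have hle : (k:ℝ)*h ≤ (k:ℝ)*h + σ := by linarith
    rw [Set.uIoc_of_le hle]
    filter_upwards [ae_restrict_mem measurableSet_Ioc, ae_restrict_of_ae (aeI v' k σ hσ0 hσh)]
      with u hu h1
    exact (h1 hu).symm
  have intJcell : ∀ (v' : EuclideanSpace ℝ (Fin d)) (k : ℕ) (σ : ℝ), 0 ≤ σ → σ ≤ h →
      IntervalIntegrable (fun u => gradU (q x v' (gridFloor h u))
        + gradU (q x v' (gridCeil h u))) volume ((k:ℝ)*h) ((k:ℝ)*h + σ) := by
    intro v' k σ hσ0 hσh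
    refine ((continuous_const : Continuous fun _ : ℝ =>
        gradU (q x v' ((k:ℝ)*h)) + gradU (q x v' ((k:ℝ)*h + h))).intervalIntegrable _ _).congr_ae ?_
    have hle : (k:ℝ)*h ≤ (k:ℝ)*h + σ := by linarith
    rw [Set.uIoc_of_le hle]
    filter_upwards [ae_restrict_mem measurableSet_Ioc, ae_restrict_of_ae (aeJ v' k σ hσ0 hσh)]
      with u hu h1
    exact (h1 hu).symm
  -- integrability from 0 to k h
  have intIfull : ∀ (v' : EuclideanSpace ℝ (Fin d)) (k : ℕ),
      IntervalIntegrable (fun u => w x v' (gridFloor h u)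
        - (u - gridFloor h u) • gradU (q x v' (gridFloor h u))) volume 0 ((k:ℝ)*h) := by
    intro v' k
    induction k with
    | zero => simp
    | succ k ih =>
        have hcast : ((k+1:ℕ):ℝ)*h = (k:ℝ)*h + h := by push_cast; ring
        rw [hcast]
        exact ih.trans (intIcell v' k h hh.le le_rfl)
  have intJfull : ∀ (v' : EuclideanSpace ℝ (Fin d)) (k : ℕ),
      IntervalIntegrable (fun u => gradU (q x v' (gridFloor h u))
        + gradU (q x v' (gridCeil h u))) volume 0 ((k:ℝ)*h) := by
    intro v' k
    induction k with
    | zero => simp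
    | succ k ih =>
        have hcast : ((k+1:ℕ):ℝ)*h = (k:ℝ)*h + h := by push_cast; ring
        rw [hcast]
        exact ih.trans (intJcell v' k h hh.le le_rfl)
  -- closed form for q on a grid cell
  have qdiff : ∀ (v' : EuclideanSpace ℝ (Fin d)) (k : ℕ) (σ : ℝ), 0 ≤ σ → σ ≤ h →
      q x v' ((k:ℝ)*h + σ) = q x v' ((k:ℝ)*h)
        + (σ • w x v' ((k:ℝ)*h) - (σ^2/2) • gradU (q x v' ((k:ℝ)*h))) := by
    intro v' k σ hσ0 hσh
    have e1 : q x v' ((k:ℝ)*h + σ) = q x v' ((k:ℝ)*h) + ∫ u in ((k:ℝ)*h)..((k:ℝ)*h + σ),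
        (w x v' (gridFloor h u) - (u - gridFloor h u) • gradU (q x v' (gridFloor h u))) := by
      rw [hq x v' ((k:ℝ)*h + σ), hq x v' ((k:ℝ)*h), add_assoc,
        intervalIntegral.integral_add_adjacent_intervals (intIfull v' k)
          (intIcell v' k σ hσ0 hσh)]
    rw [e1]
    have hcell : (∫ u in ((k:ℝ)*h)..((k:ℝ)*h + σ),
        (w x v' (gridFloor h u) - (u - gridFloor h u) • gradU (q x v' (gridFloor h u))))
        = σ • w x v' ((k:ℝ)*h) - (σ^2/2) • gradU (q x v' ((k:ℝ)*h)) := by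
      rw [← integral_affine ((k:ℝ)*h) σ (w x v' ((k:ℝ)*h)) (gradU (q x v' ((k:ℝ)*h)))]
      apply intervalIntegral.integral_congr_ae
      have hle : (k:ℝ)*h ≤ (k:ℝ)*h + σ := by linarith
      rw [Set.uIoc_of_le hle]
      exact aeI v' k σ hσ0 hσh
    rw [hcell]
  -- closed form for w on a grid cell
  have wdiff : ∀ (v' : EuclideanSpace ℝ (Fin d)) (k : ℕ) (σ : ℝ), 0 ≤ σ → σ ≤ h →
      w x v' ((k:ℝ)*h + σ) = w x v' ((k:ℝ)*h)
        - (σ/2) • (gradU (q x v' ((k:ℝ)*h)) + gradU (q x v' ((k:ℝ)*h + h))) := by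
    intro v' k σ hσ0 hσh
    have e1 : w x v' ((k:ℝ)*h + σ) = w x v' ((k:ℝ)*h) - (1/2 : ℝ) •
        ∫ u in ((k:ℝ)*h)..((k:ℝ)*h + σ),
          (gradU (q x v' (gridFloor h u)) + gradU (q x v' (gridCeil h u))) := by
      rw [hw x v' ((k:ℝ)*h + σ), hw x v' ((k:ℝ)*h),
        ← intervalIntegral.integral_add_adjacent_intervals (intJfull v' k)
          (intJcell v' k σ hσ0 hσh), smul_add]
      abel
    rw [e1]
    have hcell : (∫ u in ((k:ℝ)*h)..((k:ℝ)*h + σ),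
        (gradU (q x v' (gridFloor h u)) + gradU (q x v' (gridCeil h u))))
        = σ • (gradU (q x v' ((k:ℝ)*h)) + gradU (q x v' ((k:ℝ)*h + h))) := by
      have : (∫ u in ((k:ℝ)*h)..((k:ℝ)*h + σ),
          (gradU (q x v' ((k:ℝ)*h)) + gradU (q x v' ((k:ℝ)*h + h))))
          = σ • (gradU (q x v' ((k:ℝ)*h)) + gradU (q x v' ((k:ℝ)*h + h))) := by
        rw [intervalIntegral.integral_const]
        congr 1
        ring
      rw [← this]
      apply intervalIntegral.integral_congr_ae
      have hle : (k:ℝ)*h ≤ (k:ℝ)*h + σ := by linarith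
      rw [Set.uIoc_of_le hle]
      exact aeJ v' k σ hσ0 hσh
    rw [hcell, smul_smul, show (1/2 : ℝ) * σ = σ/2 by ring]
  -- base derivatives
  have Dq0 : Dq x v 0 = 0 := by
    have hconst : (fun v' : EuclideanSpace ℝ (Fin d) => q x v' 0) = fun _ => x := by
      funext v'
      rw [hq x v' 0, intervalIntegral.integral_same, add_zero]
    have hder : HasFDerivAt (fun v' : EuclideanSpace ℝ (Fin d) => q x v' 0) (0 : EuclideanSpace ℝ (Fin d) →L[ℝ] EuclideanSpace ℝ (Fin d)) v := by
      rw [hconst]; exact hasFDerivAt_const x v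
    exact (hDq x v 0).unique hder
  have Dw0 : Dw x v 0 = ContinuousLinearMap.id ℝ (EuclideanSpace ℝ (Fin d)) := by
    have hidm : (fun v' : EuclideanSpace ℝ (Fin d) => w x v' 0) = fun v' => v' := by
      funext v'
      rw [hw x v' 0, intervalIntegral.integral_same, smul_zero, sub_zero]
    have hder : HasFDerivAt (fun v' : EuclideanSpace ℝ (Fin d) => w x v' 0)
        (ContinuousLinearMap.id ℝ (EuclideanSpace ℝ (Fin d))) v := by
      rw [hidm]; exact hasFDerivAt_id v
    exact (hDw x v 0).unique hder
  -- derivative recursions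
  have Dqstep : ∀ (k : ℕ) (σ : ℝ), 0 ≤ σ → σ ≤ h →
      Dq x v ((k:ℝ)*h + σ) = Dq x v ((k:ℝ)*h) + σ • Dw x v ((k:ℝ)*h)
        - (σ^2/2) • ((hess (q x v ((k:ℝ)*h))).comp (Dq x v ((k:ℝ)*h))) := by
    intro k σ hσ0 hσh
    have hcomp : HasFDerivAt (fun v' => gradU (q x v' ((k:ℝ)*h)))
        ((hess (q x v ((k:ℝ)*h))).comp (Dq x v ((k:ℝ)*h))) v :=
      (hhess (q x v ((k:ℝ)*h))).comp v (hDq x v ((k:ℝ)*h))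
    have hder : HasFDerivAt (fun v' => q x v' ((k:ℝ)*h)
          + (σ • w x v' ((k:ℝ)*h) - (σ^2/2) • gradU (q x v' ((k:ℝ)*h))))
        (Dq x v ((k:ℝ)*h) + (σ • Dw x v ((k:ℝ)*h)
          - (σ^2/2) • ((hess (q x v ((k:ℝ)*h))).comp (Dq x v ((k:ℝ)*h))))) v :=
      (hDq x v ((k:ℝ)*h)).add (((hDw x v ((k:ℝ)*h)).const_smul σ).sub (hcomp.const_smul (σ^2/2)))
    have hder' : HasFDerivAt (fun v' => q x v' ((k:ℝ)*h + σ))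
        (Dq x v ((k:ℝ)*h) + (σ • Dw x v ((k:ℝ)*h)
          - (σ^2/2) • ((hess (q x v ((k:ℝ)*h))).comp (Dq x v ((k:ℝ)*h))))) v := by
      have hfun : (fun v' => q x v' ((k:ℝ)*h + σ)) = fun v' => q x v' ((k:ℝ)*h)
          + (σ • w x v' ((k:ℝ)*h) - (σ^2/2) • gradU (q x v' ((k:ℝ)*h))) :=
        funext fun v' => qdiff v' k σ hσ0 hσh
      rw [hfun]; exact hder
    rw [(hDq x v ((k:ℝ)*h + σ)).unique hder']
    abel
  have Dwstep : ∀ (k : ℕ) (σ : ℝ), 0 ≤ σ → σ ≤ h →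
      Dw x v ((k:ℝ)*h + σ) = Dw x v ((k:ℝ)*h)
        - (σ/2) • ((hess (q x v ((k:ℝ)*h))).comp (Dq x v ((k:ℝ)*h))
          + (hess (q x v ((k:ℝ)*h + h))).comp (Dq x v ((k:ℝ)*h + h))) := by
    intro k σ hσ0 hσh
    have hcomp1 : HasFDerivAt (fun v' => gradU (q x v' ((k:ℝ)*h)))
        ((hess (q x v ((k:ℝ)*h))).comp (Dq x v ((k:ℝ)*h))) v :=
      (hhess (q x v ((k:ℝ)*h))).comp v (hDq x v ((k:ℝ)*h))
    have hcomp2 : HasFDerivAt (fun v' => gradU (q x v' ((k:ℝ)*h + h)))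
        ((hess (q x v ((k:ℝ)*h + h))).comp (Dq x v ((k:ℝ)*h + h))) v :=
      (hhess (q x v ((k:ℝ)*h + h))).comp v (hDq x v ((k:ℝ)*h + h))
    have hder : HasFDerivAt (fun v' => w x v' ((k:ℝ)*h)
          - (σ/2) • (gradU (q x v' ((k:ℝ)*h)) + gradU (q x v' ((k:ℝ)*h + h))))
        (Dw x v ((k:ℝ)*h) - (σ/2) • ((hess (q x v ((k:ℝ)*h))).comp (Dq x v ((k:ℝ)*h))
          + (hess (q x v ((k:ℝ)*h + h))).comp (Dq x v ((k:ℝ)*h + h)))) v :=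
      (hDw x v ((k:ℝ)*h)).sub ((hcomp1.add hcomp2).const_smul (σ/2))
    have hder' : HasFDerivAt (fun v' => w x v' ((k:ℝ)*h + σ))
        (Dw x v ((k:ℝ)*h) - (σ/2) • ((hess (q x v ((k:ℝ)*h))).comp (Dq x v ((k:ℝ)*h))
          + (hess (q x v ((k:ℝ)*h + h))).comp (Dq x v ((k:ℝ)*h + h)))) v := by
      have hfun : (fun v' => w x v' ((k:ℝ)*h + σ)) = fun v' => w x v' ((k:ℝ)*h)
          - (σ/2) • (gradU (q x v' ((k:ℝ)*h)) + gradU (q x v' ((k:ℝ)*h + h))) :=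
        funext fun v' => wdiff v' k σ hσ0 hσh
      rw [hfun]; exact hder
    exact (hDw x v ((k:ℝ)*h + σ)).unique hder'
  -- norm of Hessian composed with Dq
  have hHq : ∀ t : ℝ, ‖(hess (q x v t)).comp (Dq x v t)‖ ≤ L * ‖Dq x v t‖ := fun t =>
    le_trans (ContinuousLinearMap.opNorm_comp_le _ _)
      (mul_le_mul_of_nonneg_right (hL _) (norm_nonneg _))
  have nqstep : ∀ (k : ℕ) (σ : ℝ), 0 ≤ σ → σ ≤ h →
      ‖Dq x v ((k:ℝ)*h + σ)‖ ≤ ‖Dq x v ((k:ℝ)*h)‖ + σ * ‖Dw x v ((k:ℝ)*h)‖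
        + (σ^2/2) * (L * ‖Dq x v ((k:ℝ)*h)‖) := by
    intro k σ hσ0 hσh
    rw [Dqstep k σ hσ0 hσh]
    have h1 : ‖Dq x v ((k:ℝ)*h) + σ • Dw x v ((k:ℝ)*h)
        - (σ^2/2) • ((hess (q x v ((k:ℝ)*h))).comp (Dq x v ((k:ℝ)*h)))‖
        ≤ ‖Dq x v ((k:ℝ)*h)‖ + ‖σ • Dw x v ((k:ℝ)*h)‖
          + ‖(σ^2/2) • ((hess (q x v ((k:ℝ)*h))).comp (Dq x v ((k:ℝ)*h)))‖ :=
      (norm_sub_le _ _).trans (by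
        linarith [norm_add_le (Dq x v ((k:ℝ)*h)) (σ • Dw x v ((k:ℝ)*h))])
    have ns1 := norm_smul (α := ℝ)
      (β := EuclideanSpace ℝ (Fin d) →L[ℝ] EuclideanSpace ℝ (Fin d)) σ (Dw x v ((k:ℝ)*h))
    have ns2 := norm_smul (α := ℝ)
      (β := EuclideanSpace ℝ (Fin d) →L[ℝ] EuclideanSpace ℝ (Fin d)) (σ^2/2)
      ((hess (q x v ((k:ℝ)*h))).comp (Dq x v ((k:ℝ)*h)))
    rw [ns1, ns2, Real.norm_eq_abs, Real.norm_eq_abs,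
      abs_of_nonneg hσ0, abs_of_nonneg (by positivity : (0:ℝ) ≤ σ^2/2)] at h1
    have h3 := mul_le_mul_of_nonneg_left (hHq ((k:ℝ)*h))
      (by positivity : (0:ℝ) ≤ σ^2/2)
    linarith
  have nwstep : ∀ (k : ℕ) (σ : ℝ), 0 ≤ σ → σ ≤ h →
      ‖Dw x v ((k:ℝ)*h + σ)‖ ≤ ‖Dw x v ((k:ℝ)*h)‖
        + (σ/2) * (L * ‖Dq x v ((k:ℝ)*h)‖ + L * ‖Dq x v ((k:ℝ)*h + h)‖) := by
    intro k σ hσ0 hσh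
    rw [Dwstep k σ hσ0 hσh]
    have h1 := norm_sub_le (Dw x v ((k:ℝ)*h))
      ((σ/2) • ((hess (q x v ((k:ℝ)*h))).comp (Dq x v ((k:ℝ)*h))
        + (hess (q x v ((k:ℝ)*h + h))).comp (Dq x v ((k:ℝ)*h + h))))
    have ns1 := norm_smul (α := ℝ)
      (β := EuclideanSpace ℝ (Fin d) →L[ℝ] EuclideanSpace ℝ (Fin d)) (σ/2)
      ((hess (q x v ((k:ℝ)*h))).comp (Dq x v ((k:ℝ)*h))
        + (hess (q x v ((k:ℝ)*h + h))).comp (Dq x v ((k:ℝ)*h + h)))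
    rw [ns1, Real.norm_eq_abs, abs_of_nonneg (by positivity : (0:ℝ) ≤ σ/2)] at h1
    have h2 := norm_add_le ((hess (q x v ((k:ℝ)*h))).comp (Dq x v ((k:ℝ)*h)))
      ((hess (q x v ((k:ℝ)*h + h))).comp (Dq x v ((k:ℝ)*h + h)))
    have h3 := hHq ((k:ℝ)*h)
    have h4 := hHq ((k:ℝ)*h + h)
    have h5 : (σ/2) * ‖(hess (q x v ((k:ℝ)*h))).comp (Dq x v ((k:ℝ)*h))
        + (hess (q x v ((k:ℝ)*h + h))).comp (Dq x v ((k:ℝ)*h + h))‖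
        ≤ (σ/2) * (L * ‖Dq x v ((k:ℝ)*h)‖ + L * ‖Dq x v ((k:ℝ)*h + h)‖) := by
      apply mul_le_mul_of_nonneg_left _ (by positivity : (0:ℝ) ≤ σ/2)
      linarith
    linarith
  -- main induction step bound over a single grid cell
  have stepBound : ∀ k : ℕ, (k:ℝ)*h + h ≤ T → ∀ σ : ℝ, 0 ≤ σ → σ ≤ h →
      ‖Dq x v ((k:ℝ)*h)‖ ≤ 6/5*((k:ℝ)*h) →
      ‖Dw x v ((k:ℝ)*h)‖ ≤ 1 + 3/5*L*(((k:ℝ)*h)^2 + ((k:ℝ)*h)*h) →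
      ‖Dq x v ((k:ℝ)*h + σ)‖ ≤ 6/5*((k:ℝ)*h + h) ∧
        ‖Dw x v ((k:ℝ)*h + σ)‖ ≤ 1 + 3/5*L*(((k:ℝ)*h + h)^2 + ((k:ℝ)*h + h)*h) := by
    intro k hkT σ hσ0 hσh hA hB
    have ht0 : 0 ≤ (k:ℝ)*h := by positivity
    have hBnn : (0:ℝ) ≤ ‖Dw x v ((k:ℝ)*h)‖ := norm_nonneg _
    have hAnn : (0:ℝ) ≤ ‖Dq x v ((k:ℝ)*h)‖ := norm_nonneg _
    have e1 : ((k:ℝ)*h + h)^2 ≤ T^2 := by nlinarith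
    have e2 : L*(((k:ℝ)*h) + h)^2 ≤ 1/6 := by
      nlinarith [mul_le_mul_of_nonneg_left e1 hL0,
        mul_nonneg hL0 (mul_nonneg hT.le hh.le)]
    have e3 : 3*L*(((k:ℝ)*h)^2 + 2*((k:ℝ)*h)*h) ≤ 1/2 := by
      nlinarith [mul_nonneg hL0 (sq_nonneg h)]
    have bound1 : ∀ τ : ℝ, 0 ≤ τ → τ ≤ h →
        ‖Dq x v ((k:ℝ)*h + τ)‖ ≤ 6/5*((k:ℝ)*h + h) := by
      intro τ hτ0 hτh
      have hq1 := nqstep k τ hτ0 hτh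
      have p1 : τ * ‖Dw x v ((k:ℝ)*h)‖ ≤ h * ‖Dw x v ((k:ℝ)*h)‖ :=
        mul_le_mul_of_nonneg_right hτh hBnn
      have p2 : τ^2 * (L * ‖Dq x v ((k:ℝ)*h)‖) ≤ h^2 * (L * ‖Dq x v ((k:ℝ)*h)‖) :=
        mul_le_mul_of_nonneg_right (by nlinarith) (mul_nonneg hL0 hAnn)
      have p3 : h * ‖Dw x v ((k:ℝ)*h)‖ ≤ h * (1 + 3/5*L*(((k:ℝ)*h)^2 + ((k:ℝ)*h)*h)) :=
        mul_le_mul_of_nonneg_left hB hh.le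
      have p4 : h^2 * (L * ‖Dq x v ((k:ℝ)*h)‖) ≤ h^2 * (L * (6/5*((k:ℝ)*h))) := by
        apply mul_le_mul_of_nonneg_left _ (sq_nonneg h)
        exact mul_le_mul_of_nonneg_left hA hL0
      have e4 : h * (3*L*(((k:ℝ)*h)^2 + 2*((k:ℝ)*h)*h)) ≤ h * (1/2) :=
        mul_le_mul_of_nonneg_left e3 hh.le
      nlinarith
    constructor
    · exact bound1 σ hσ0 hσh
    · have hq2 := bound1 h hh.le le_rfl
      have hw1 := nwstep k σ hσ0 hσh
      have hsum : L * ‖Dq x v ((k:ℝ)*h)‖ + L * ‖Dq x v ((k:ℝ)*h + h)‖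
          ≤ L * (6/5*((k:ℝ)*h)) + L * (6/5*((k:ℝ)*h + h)) :=
        add_le_add (mul_le_mul_of_nonneg_left hA hL0)
          (mul_le_mul_of_nonneg_left hq2 hL0)
      have hsnn : (0:ℝ) ≤ L * ‖Dq x v ((k:ℝ)*h)‖ + L * ‖Dq x v ((k:ℝ)*h + h)‖ :=
        add_nonneg (mul_nonneg hL0 (norm_nonneg _)) (mul_nonneg hL0 (norm_nonneg _))
      have p1 : (σ/2) * (L * ‖Dq x v ((k:ℝ)*h)‖ + L * ‖Dq x v ((k:ℝ)*h + h)‖)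
          ≤ (h/2) * (L * (6/5*((k:ℝ)*h)) + L * (6/5*((k:ℝ)*h + h))) := by
        apply mul_le_mul (by linarith) hsum hsnn (by positivity)
      nlinarith [mul_nonneg hL0 (sq_nonneg h)]
  -- induction over grid points
  have main : ∀ k : ℕ, k ≤ N →
      ‖Dq x v ((k:ℝ)*h)‖ ≤ 6/5*((k:ℝ)*h) ∧
        ‖Dw x v ((k:ℝ)*h)‖ ≤ 1 + 3/5*L*(((k:ℝ)*h)^2 + ((k:ℝ)*h)*h) := by
    intro k
    induction k with
    | zero =>
        intro _
        constructor
        · simp only [Nat.cast_zero, zero_mul]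
          rw [Dq0, norm_zero]
          norm_num
        · simp only [Nat.cast_zero, zero_mul]
          rw [Dw0]
          have := ContinuousLinearMap.norm_id_le (𝕜 := ℝ) (E := EuclideanSpace ℝ (Fin d))
          nlinarith [this]
    | succ k ih =>
        intro hk1
        obtain ⟨hA, hB⟩ := ih (Nat.le_of_succ_le hk1)
        have hkT : (k:ℝ)*h + h ≤ T := by
          rw [hTh]
          have : (k:ℝ) + 1 ≤ (N:ℝ) := by exact_mod_cast hk1
          nlinarith
        have hstep := stepBound k hkT h hh.le le_rfl hA hB
        have hcast : ((k+1:ℕ):ℝ)*h = (k:ℝ)*h + h := by push_cast; ring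
        rw [hcast]
        exact hstep
  -- conclusion
  have final : ∀ s : ℝ, 0 ≤ s → s ≤ T → ‖Dq x v s‖ ≤ 6/5*T ∧ ‖Dw x v s‖ ≤ 6/5 := by
    intro s hs0 hsT
    rcases eq_or_lt_of_le hs0 with h0 | h0
    · rw [← h0]
      constructor
      · rw [Dq0, norm_zero]; positivity
      · rw [Dw0]
        have := ContinuousLinearMap.norm_id_le (𝕜 := ℝ) (E := EuclideanSpace ℝ (Fin d))
        linarith
    · set m : ℤ := ⌈s/h⌉ with hm
      have hm1 : 1 ≤ m := Int.ceil_pos.mpr (div_pos h0 hh)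
      have hmN : m ≤ (N:ℤ) := by
        apply Int.ceil_le.mpr
        rw [div_le_iff₀ hh]
        push_cast
        rw [hTh] at hsT
        linarith
      set k : ℕ := (m-1).toNat with hk
      have hkZ : (k:ℤ) = m - 1 := Int.toNat_of_nonneg (by omega)
      have hkR : (k:ℝ) = (m:ℝ) - 1 := by exact_mod_cast hkZ
      have hlow : ((m:ℝ) - 1) * h < s := by
        have h1 : ((m:ℝ) - 1) < s/h := by
          have := Int.lt_ceil.mp (show m - 1 < ⌈s/h⌉ by omega)
          push_cast at this
          linarith
        rwa [← lt_div_iff₀ hh]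
      have hhigh : s ≤ (m:ℝ) * h := by
        have h1 : s/h ≤ (m:ℝ) := Int.le_ceil (s/h)
        rwa [div_le_iff₀ hh] at h1
      have hσ0 : 0 ≤ s - (k:ℝ)*h := by rw [hkR]; linarith
      have hσh : s - (k:ℝ)*h ≤ h := by rw [hkR]; linarith
      have hkT : (k:ℝ)*h + h ≤ T := by
        rw [hkR, hTh]
        have : (m:ℝ) ≤ (N:ℝ) := by exact_mod_cast hmN
        nlinarith
      obtain ⟨hA, hB⟩ := main k (by omega)
      have hstep := stepBound k hkT (s - (k:ℝ)*h) hσ0 hσh hA hB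
      rw [show s = (k:ℝ)*h + (s - (k:ℝ)*h) by ring]
      have ht0 : 0 ≤ (k:ℝ)*h := by positivity
      constructor
      · exact hstep.1.trans (by nlinarith)
      · refine hstep.2.trans ?_
        have e1 : ((k:ℝ)*h + h)^2 ≤ T^2 := by nlinarith
        have e2 : ((k:ℝ)*h + h)*h ≤ T*h := by nlinarith
        have e3 : L*(((k:ℝ)*h + h)^2 + ((k:ℝ)*h + h)*h) ≤ L*(T^2 + T*h) := by
          apply mul_le_mul_of_nonneg_left _ hL0
          linarith
        nlinarith
  exact ⟨fun s hs => (final s hs.1 hs.2).1, fun s hs => (final s hs.1 hs.2).2⟩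
end

section
/- Suppose U has a global minimum at 0 with U(0) = 0, U ∈ C³(ℝ^d), ‖D²U‖ ≤ L, ‖D³U‖ ≤ L_H, L(T² + Th) ≤ 1/6, T/h ∈ ℕ. For x, y, v ∈ ℝ^d, let Φ(v) be the unique velocity such that q̃_T(x,v) = q̃_T(y, Φ(v)) (Verlet flows with same endpoint). Then T‖Φ(v) − v‖ ≤ (3/2)‖x − y‖. -/
open MeasureTheory intervalIntegral

lemma oneshot_gridFloor_eq {h : ℝ} (hh : 0 < h) (j : ℕ) (s : ℝ)
    (h1 : (j:ℝ)*h < s) (h2 : s < ((j:ℝ)+1)*h) : gridFloor h s = (j:ℝ)*h := by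
  unfold gridFloor
  have : ⌊s / h⌋ = (j : ℤ) := by
    rw [Int.floor_eq_iff]
    constructor
    · push_cast
      exact le_of_lt ((lt_div_iff₀ hh).2 (by linarith))
    · push_cast
      exact (div_lt_iff₀ hh).2 (by linarith)
  rw [this]; push_cast; ring

lemma oneshot_gridCeil_eq {h : ℝ} (hh : 0 < h) (j : ℕ) (s : ℝ)
    (h1 : (j:ℝ)*h < s) (h2 : s ≤ ((j:ℝ)+1)*h) : gridCeil h s = ((j:ℝ)+1)*h := by
  unfold gridCeil
  have : ⌈s / h⌉ = (j : ℤ) + 1 := by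
    rw [Int.ceil_eq_iff]
    constructor
    · push_cast
      exact (lt_div_iff₀ hh).2 (by linarith)
    · push_cast
      exact (div_le_iff₀ hh).2 (by linarith)
  rw [this]; push_cast; ring

lemma oneshot_piece {E : Type*} [NormedAddCommGroup E] [NormedSpace ℝ E]
    (F G : ℝ → E) (a b : ℝ) (hab : a ≤ b) (hG : Continuous G)
    (hFG : ∀ s ∈ Set.Ioo a b, F s = G s) :
    IntervalIntegrable F volume a b ∧ (∫ s in a..b, F s) = ∫ s in a..b, G s := by
  have hne : ∀ᵐ s : ℝ, s ≠ b := by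
    rw [ae_iff]
    simpa using measure_singleton (b : ℝ)
  have hmem : ∀ᵐ (s : ℝ), s ∈ Set.uIoc a b → F s = G s := by
    filter_upwards [hne] with s hs hm
    rw [Set.uIoc_of_le hab] at hm
    exact hFG s ⟨hm.1, lt_of_le_of_ne hm.2 hs⟩
  have hres : G =ᵐ[volume.restrict (Set.uIoc a b)] F := by
    refine (ae_restrict_iff' measurableSet_uIoc).2 ?_
    filter_upwards [hmem] with s hs hm
    exact (hs hm).symm
  exact ⟨(hG.intervalIntegrable a b).congr_ae hres,
    intervalIntegral.integral_congr_ae hmem⟩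

lemma oneshot_affine {E : Type*} [NormedAddCommGroup E] [NormedSpace ℝ E] [CompleteSpace E]
    (c1 c2 : E) (a b : ℝ) :
    (∫ s in a..b, (c1 - (s - a) • c2)) = (b-a) • c1 - ((b-a)^2/2) • c2 := by
  have hc : Continuous (fun s : ℝ => (s - a) • c2) :=
    (continuous_id.sub continuous_const).smul continuous_const
  rw [intervalIntegral.integral_sub intervalIntegrable_const (hc.intervalIntegrable a b),
    intervalIntegral.integral_const, intervalIntegral.integral_smul_const]
  congr 2
  have := intervalIntegral.integral_comp_sub_right (a := a) (b := b) (fun t : ℝ => t) a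
  rw [this, integral_id]
  ring

lemma oneshot_sum_odd (k : ℕ) : ∑ j ∈ Finset.range k, (2*(j:ℝ)+1) = (k:ℝ)^2 := by
  induction k with
  | zero => simp
  | succ n ih => rw [Finset.sum_range_succ, ih]; push_cast; ring

set_option maxHeartbeats 2000000 in
/-- One-shot coupling bound for the velocity matching map `Φ` defined by
`q̃_T(x,v) = q̃_T(y, Φ(v))` (Lemma `oneshot:1:a`): `T‖Φ(v) − v‖ ≤ (3/2)‖x − y‖`. -/
theorem oneshot_velocity_bound {d : ℕ}
    (U : EuclideanSpace ℝ (Fin d) → ℝ)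
    (gradU : EuclideanSpace ℝ (Fin d) → EuclideanSpace ℝ (Fin d))
    (hess : EuclideanSpace ℝ (Fin d) →
      (EuclideanSpace ℝ (Fin d) →L[ℝ] EuclideanSpace ℝ (Fin d)))
    (L LH T h : ℝ) (N : ℕ)
    (hmin : ∀ x, U 0 ≤ U x) (hU0 : U 0 = 0)
    (hgrad : ∀ x, HasFDerivAt U ((innerSL ℝ) (gradU x)) x)
    (hhess : ∀ x, HasFDerivAt gradU (hess x) x)
    (hL : ∀ x, ‖hess x‖ ≤ L)
    (hLH : ∀ x y, ‖hess x - hess y‖ ≤ LH * ‖x - y‖)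
    (hT : 0 < T) (hh : 0 < h) (hN : 0 < N) (hTh : T = N * h)
    (hsmall : L * (T^2 + T * h) ≤ 1/6)
    (q w : EuclideanSpace ℝ (Fin d) → EuclideanSpace ℝ (Fin d) → ℝ →
      EuclideanSpace ℝ (Fin d))
    (hq : ∀ x v t, q x v t = x + ∫ s in (0:ℝ)..t,
      (w x v (gridFloor h s) - (s - gridFloor h s) • gradU (q x v (gridFloor h s))))
    (hw : ∀ x v t, w x v t = v - (1/2 : ℝ) • ∫ s in (0:ℝ)..t,
      (gradU (q x v (gridFloor h s)) + gradU (q x v (gridCeil h s))))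
    (x y : EuclideanSpace ℝ (Fin d))
    (Φ : EuclideanSpace ℝ (Fin d) → EuclideanSpace ℝ (Fin d))
    (hΦ : ∀ v, q x v T = q y (Φ v) T) :
    ∀ v, T * ‖Φ v - v‖ ≤ (3/2) * ‖x - y‖ := by
  intro v
  set u := Φ v with hu
  -- basic facts
  have hL0 : 0 ≤ L := le_trans (norm_nonneg _) (hL 0)
  have hlip : ∀ a b : EuclideanSpace ℝ (Fin d), ‖gradU a - gradU b‖ ≤ L * ‖a - b‖ := by
    intro a b
    have := Convex.norm_image_sub_le_of_norm_hasFDerivWithin_le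
      (f := gradU) (f' := hess) (s := Set.univ) (C := L)
      (fun p _ => (hhess p).hasFDerivWithinAt) (fun p _ => hL p)
      convex_univ (Set.mem_univ b) (Set.mem_univ a)
    simpa using this
  -- grid point values of w
  have W : ∀ (z v0 : EuclideanSpace ℝ (Fin d)) (k : ℕ), w z v0 ((k:ℝ)*h) =
      v0 - (h/2) • ∑ j ∈ Finset.range k,
        (gradU (q z v0 ((j:ℝ)*h)) + gradU (q z v0 (((j:ℝ)+1)*h))) := by
    intro z v0 k
    have hpieces : ∀ j : ℕ,
        IntervalIntegrable (fun s => gradU (q z v0 (gridFloor h s)) + gradU (q z v0 (gridCeil h s)))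
          volume ((j:ℝ)*h) (((j:ℝ)+1)*h) ∧
        (∫ s in ((j:ℝ)*h)..(((j:ℝ)+1)*h),
            (gradU (q z v0 (gridFloor h s)) + gradU (q z v0 (gridCeil h s)))) =
          h • (gradU (q z v0 ((j:ℝ)*h)) + gradU (q z v0 (((j:ℝ)+1)*h))) := by
      intro j
      have hab : (j:ℝ)*h ≤ ((j:ℝ)+1)*h := by nlinarith [hh.le, (Nat.cast_nonneg j : (0:ℝ) ≤ (j:ℝ))]
      obtain ⟨hint, heq⟩ := oneshot_piece
        (fun s => gradU (q z v0 (gridFloor h s)) + gradU (q z v0 (gridCeil h s)))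
        (fun _ => gradU (q z v0 ((j:ℝ)*h)) + gradU (q z v0 (((j:ℝ)+1)*h)))
        ((j:ℝ)*h) (((j:ℝ)+1)*h) hab continuous_const
        (by
          intro s hs
          simp only [oneshot_gridFloor_eq hh j s hs.1 hs.2,
            oneshot_gridCeil_eq hh j s hs.1 hs.2.le])
      refine ⟨hint, ?_⟩
      rw [heq, intervalIntegral.integral_const,
        show ((j:ℝ)+1)*h - (j:ℝ)*h = h from by ring]
    have hsplit := intervalIntegral.sum_integral_adjacent_intervals
      (μ := volume) (n := k) (a := fun n : ℕ => (n:ℝ)*h)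
      (f := fun s => gradU (q z v0 (gridFloor h s)) + gradU (q z v0 (gridCeil h s)))
      (fun j _ => by push_cast; exact (hpieces j).1)
    simp only [Nat.cast_zero, zero_mul, Nat.cast_add, Nat.cast_one] at hsplit
    rw [hw z v0 ((k:ℝ)*h), ← hsplit]
    have : ∑ j ∈ Finset.range k,
        ∫ s in ((j:ℝ)*h)..(((j:ℝ)+1)*h),
          (gradU (q z v0 (gridFloor h s)) + gradU (q z v0 (gridCeil h s))) =
        ∑ j ∈ Finset.range k,
          h • (gradU (q z v0 ((j:ℝ)*h)) + gradU (q z v0 (((j:ℝ)+1)*h))) :=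
      Finset.sum_congr rfl (fun j _ => (hpieces j).2)
    push_cast
    rw [this, ← Finset.smul_sum, smul_smul,
      show (1/2:ℝ)*h = h/2 from by ring]
  -- grid point values of q
  have Q : ∀ (z v0 : EuclideanSpace ℝ (Fin d)) (k : ℕ), q z v0 ((k:ℝ)*h) =
      z + ∑ j ∈ Finset.range k,
        (h • w z v0 ((j:ℝ)*h) - (h^2/2) • gradU (q z v0 ((j:ℝ)*h))) := by
    intro z v0 k
    have hpieces : ∀ j : ℕ,
        IntervalIntegrable
          (fun s => w z v0 (gridFloor h s) - (s - gridFloor h s) • gradU (q z v0 (gridFloor h s)))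
          volume ((j:ℝ)*h) (((j:ℝ)+1)*h) ∧
        (∫ s in ((j:ℝ)*h)..(((j:ℝ)+1)*h),
            (w z v0 (gridFloor h s) - (s - gridFloor h s) • gradU (q z v0 (gridFloor h s)))) =
          h • w z v0 ((j:ℝ)*h) - (h^2/2) • gradU (q z v0 ((j:ℝ)*h)) := by
      intro j
      have hab : (j:ℝ)*h ≤ ((j:ℝ)+1)*h := by nlinarith [hh.le, (Nat.cast_nonneg j : (0:ℝ) ≤ (j:ℝ))]
      obtain ⟨hint, heq⟩ := oneshot_piece
        (fun s => w z v0 (gridFloor h s) - (s - gridFloor h s) • gradU (q z v0 (gridFloor h s)))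
        (fun s => w z v0 ((j:ℝ)*h) - (s - (j:ℝ)*h) • gradU (q z v0 ((j:ℝ)*h)))
        ((j:ℝ)*h) (((j:ℝ)+1)*h) hab
        (continuous_const.sub ((continuous_id.sub continuous_const).smul continuous_const))
        (by
          intro s hs
          simp only [oneshot_gridFloor_eq hh j s hs.1 hs.2])
      refine ⟨hint, ?_⟩
      rw [heq, oneshot_affine, show ((j:ℝ)+1)*h - (j:ℝ)*h = h from by ring]
    have hsplit := intervalIntegral.sum_integral_adjacent_intervals
      (μ := volume) (n := k) (a := fun n : ℕ => (n:ℝ)*h)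
      (f := fun s => w z v0 (gridFloor h s) - (s - gridFloor h s) • gradU (q z v0 (gridFloor h s)))
      (fun j _ => by push_cast; exact (hpieces j).1)
    simp only [Nat.cast_zero, zero_mul, Nat.cast_add, Nat.cast_one] at hsplit
    rw [hq z v0 ((k:ℝ)*h), ← hsplit]
    congr 1
    push_cast
    exact Finset.sum_congr rfl (fun j _ => (hpieces j).2)
  -- closed-form for q at grid points
  have main : ∀ (z v0 : EuclideanSpace ℝ (Fin d)) (k : ℕ), q z v0 ((k:ℝ)*h) =
      z + (((k:ℝ)*h) • v0 - (h^2/2) • ∑ j ∈ Finset.range k,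
        ((∑ i ∈ Finset.range j,
          (gradU (q z v0 ((i:ℝ)*h)) + gradU (q z v0 (((i:ℝ)+1)*h)))) +
          gradU (q z v0 ((j:ℝ)*h)))) := by
    intro z v0 k
    rw [Q z v0 k]
    congr 1
    have hterm : ∀ j ∈ Finset.range k,
        h • w z v0 ((j:ℝ)*h) - (h^2/2) • gradU (q z v0 ((j:ℝ)*h)) =
        h • v0 - (h^2/2) • ((∑ i ∈ Finset.range j,
          (gradU (q z v0 ((i:ℝ)*h)) + gradU (q z v0 (((i:ℝ)+1)*h)))) +
          gradU (q z v0 ((j:ℝ)*h))) := by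
      intro j _
      rw [W z v0 j]
      module
    rw [Finset.sum_congr rfl hterm, Finset.sum_sub_distrib, Finset.sum_const,
      Finset.card_range, ← Nat.cast_smul_eq_nsmul ℝ, smul_smul, Finset.smul_sum]
  -- differences
  set G : ℕ → EuclideanSpace ℝ (Fin d) := fun n =>
    gradU (q x v ((n:ℝ)*h)) - gradU (q y u ((n:ℝ)*h)) with hG
  have hdiff : ∀ k : ℕ, q x v ((k:ℝ)*h) - q y u ((k:ℝ)*h) =
      (x - y) + ((((k:ℝ)*h) • (v - u)) -
        (h^2/2) • ∑ j ∈ Finset.range k,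
          ((∑ i ∈ Finset.range j, (G i + G (i+1))) + G j)) := by
    intro k
    rw [main x v k, main y u k]
    have hS :
        ∑ j ∈ Finset.range k, ((∑ i ∈ Finset.range j,
            (gradU (q x v ((i:ℝ)*h)) + gradU (q x v (((i:ℝ)+1)*h)))) + gradU (q x v ((j:ℝ)*h)))
        - ∑ j ∈ Finset.range k, ((∑ i ∈ Finset.range j,
            (gradU (q y u ((i:ℝ)*h)) + gradU (q y u (((i:ℝ)+1)*h)))) + gradU (q y u ((j:ℝ)*h)))
        = ∑ j ∈ Finset.range k, ((∑ i ∈ Finset.range j, (G i + G (i+1))) + G j) := by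
      rw [← Finset.sum_sub_distrib]
      refine Finset.sum_congr rfl fun j _ => ?_
      have hinner : ∑ i ∈ Finset.range j, (G i + G (i+1)) =
          ∑ i ∈ Finset.range j,
            (gradU (q x v ((i:ℝ)*h)) + gradU (q x v (((i:ℝ)+1)*h)))
          - ∑ i ∈ Finset.range j,
            (gradU (q y u ((i:ℝ)*h)) + gradU (q y u (((i:ℝ)+1)*h))) := by
        rw [← Finset.sum_sub_distrib]
        refine Finset.sum_congr rfl fun i _ => ?_
        simp only [hG]
        push_cast
        abel
      rw [hinner]
      simp only [hG]
      abel
    rw [← hS, smul_sub ((k:ℝ)*h) v u, smul_sub ((h:ℝ)^2/2)]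
    abel
  have hGb : ∀ n : ℕ, ‖G n‖ ≤ L * ‖q x v ((n:ℝ)*h) - q y u ((n:ℝ)*h)‖ :=
    fun n => hlip _ _
  set D := ‖x - y‖ with hD
  set V := ‖v - u‖ with hV
  set C := (12/11) * (D + T*V) with hC
  have hD0 : 0 ≤ D := norm_nonneg _
  have hV0 : 0 ≤ V := norm_nonneg _
  have hC0 : 0 ≤ C := by
    have : 0 ≤ T*V := mul_nonneg hT.le hV0
    rw [hC]; linarith
  have hLT2 : L * T^2 ≤ 1/6 := by
    nlinarith [mul_nonneg (mul_nonneg hL0 hT.le) hh.le]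
  have hkh : ∀ k : ℕ, k ≤ N → (k:ℝ)*h ≤ T := by
    intro k hk
    rw [hTh]
    have : (k:ℝ) ≤ (N:ℝ) := Nat.cast_le.2 hk
    nlinarith
  have hkey : ∀ k : ℕ, k ≤ N → (h^2/2) * (L*(C*(k:ℝ)^2)) ≤ C/12 := by
    intro k hk
    have h1 : (k:ℝ)*h ≤ T := hkh k hk
    have h0 : 0 ≤ (k:ℝ)*h := by positivity
    have h2 : L * ((k:ℝ)*h)^2 ≤ L * T^2 :=
      mul_le_mul_of_nonneg_left (by nlinarith) hL0
    calc (h^2/2) * (L*(C*(k:ℝ)^2)) = (L * ((k:ℝ)*h)^2) * (C/2) := by ring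
      _ ≤ (L*T^2) * (C/2) := mul_le_mul_of_nonneg_right h2 (by linarith)
      _ ≤ (1/6) * (C/2) := mul_le_mul_of_nonneg_right hLT2 (by linarith)
      _ = C/12 := by ring
  have hsum : ∀ k : ℕ, k ≤ N →
      (∀ m : ℕ, m < k → ‖q x v ((m:ℝ)*h) - q y u ((m:ℝ)*h)‖ ≤ C) →
      ‖∑ j ∈ Finset.range k, ((∑ i ∈ Finset.range j, (G i + G (i+1))) + G j)‖
        ≤ L * (C * (k:ℝ)^2) := by
    intro k hk hm
    have hGC : ∀ m : ℕ, m < k → ‖G m‖ ≤ L * C := fun m hmk =>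
      le_trans (hGb m) (mul_le_mul_of_nonneg_left (hm m hmk) hL0)
    calc ‖∑ j ∈ Finset.range k, ((∑ i ∈ Finset.range j, (G i + G (i+1))) + G j)‖
        ≤ ∑ j ∈ Finset.range k,
          ‖(∑ i ∈ Finset.range j, (G i + G (i+1))) + G j‖ := norm_sum_le _ _
      _ ≤ ∑ j ∈ Finset.range k, (2*(j:ℝ)+1) * (L*C) := by
          refine Finset.sum_le_sum fun j hj => ?_
          have hjk : j < k := Finset.mem_range.1 hj
          have step1 : ‖(∑ i ∈ Finset.range j, (G i + G (i+1))) + G j‖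
              ≤ (∑ i ∈ Finset.range j, (‖G i‖ + ‖G (i+1)‖)) + ‖G j‖ := by
            refine le_trans (norm_add_le _ _) (add_le_add ?_ le_rfl)
            exact le_trans (norm_sum_le _ _)
              (Finset.sum_le_sum fun i _ => norm_add_le _ _)
          have step2 : (∑ i ∈ Finset.range j, (‖G i‖ + ‖G (i+1)‖)) + ‖G j‖
              ≤ (∑ i ∈ Finset.range j, (L*C + L*C)) + L*C := by
            refine add_le_add (Finset.sum_le_sum fun i hi => ?_) (hGC j hjk)
            have hij : i < j := Finset.mem_range.1 hi
            exact add_le_add (hGC i (lt_trans hij hjk))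
              (hGC (i+1) (lt_of_le_of_lt hij hjk))
          refine le_trans step1 (le_trans step2 ?_)
          rw [Finset.sum_const, Finset.card_range, nsmul_eq_mul]
          ring_nf
          exact le_refl _
      _ = (∑ j ∈ Finset.range k, (2*(j:ℝ)+1)) * (L*C) := by rw [Finset.sum_mul]
      _ = (k:ℝ)^2 * (L*C) := by rw [oneshot_sum_odd]
      _ = L * (C * (k:ℝ)^2) := by ring
  -- a priori bound by strong induction
  have hbound : ∀ k : ℕ, k ≤ N → ‖q x v ((k:ℝ)*h) - q y u ((k:ℝ)*h)‖ ≤ C := by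
    intro k
    induction k using Nat.strong_induction_on with
    | _ k ih =>
      intro hk
      have hS := hsum k hk fun m hmk => ih m hmk (le_trans hmk.le hk)
      have h0 : 0 ≤ (k:ℝ)*h := by positivity
      have h1 : ‖q x v ((k:ℝ)*h) - q y u ((k:ℝ)*h)‖
          ≤ D + (((k:ℝ)*h) * V + (h^2/2) *
            ‖∑ j ∈ Finset.range k, ((∑ i ∈ Finset.range j, (G i + G (i+1))) + G j)‖) := by
        rw [hdiff k]
        refine le_trans (norm_add_le _ _) (add_le_add le_rfl ?_)
        refine le_trans (norm_sub_le _ _) ?_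
        rw [norm_smul, norm_smul, Real.norm_of_nonneg h0,
          Real.norm_of_nonneg (by positivity : (0:ℝ) ≤ h^2/2)]
      have h2 : (h^2/2) *
          ‖∑ j ∈ Finset.range k, ((∑ i ∈ Finset.range j, (G i + G (i+1))) + G j)‖
          ≤ C/12 :=
        le_trans (mul_le_mul_of_nonneg_left hS (by positivity)) (hkey k hk)
      have h3 : ((k:ℝ)*h) * V ≤ T * V :=
        mul_le_mul_of_nonneg_right (hkh k hk) hV0
      rw [hC] at *
      linarith
  -- conclusion
  have hu0 : q x v T = q y u T := by rw [hu]; exact hΦ v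
  have hzero : q x v ((N:ℝ)*h) - q y u ((N:ℝ)*h) = 0 := by
    rw [← hTh, hu0, sub_self]
  have hvu : T • (v - u) =
      (h^2/2) • ∑ j ∈ Finset.range N, ((∑ i ∈ Finset.range j, (G i + G (i+1))) + G j)
      - (x - y) := by
    have h1 := hdiff N
    rw [hzero, ← hTh] at h1
    have h2 : (x - y) + (T • (v - u) -
        (h^2/2) • ∑ j ∈ Finset.range N, ((∑ i ∈ Finset.range j, (G i + G (i+1))) + G j)) = 0 :=
      h1.symm
    have h3 : T • (v - u) -
        ((h^2/2) • ∑ j ∈ Finset.range N, ((∑ i ∈ Finset.range j, (G i + G (i+1))) + G j)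
          - (x - y)) =
        (x - y) + (T • (v - u) -
        (h^2/2) • ∑ j ∈ Finset.range N, ((∑ i ∈ Finset.range j, (G i + G (i+1))) + G j)) := by
      abel
    rw [← sub_eq_zero, h3, h2]
  have hSN := hsum N le_rfl fun m hmk => hbound m hmk.le
  have hTV : T * V ≤ D + C/12 := by
    have h1 : ‖T • (v - u)‖ = T * V := by
      rw [norm_smul, Real.norm_of_nonneg hT.le]
    have h2 : ‖(h^2/2) • ∑ j ∈ Finset.range N, ((∑ i ∈ Finset.range j, (G i + G (i+1))) + G j)
        - (x - y)‖ ≤ (h^2/2) *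
          ‖∑ j ∈ Finset.range N, ((∑ i ∈ Finset.range j, (G i + G (i+1))) + G j)‖ + D := by
      refine le_trans (norm_sub_le _ _) (add_le_add ?_ le_rfl)
      rw [norm_smul, Real.norm_of_nonneg (by positivity : (0:ℝ) ≤ h^2/2)]
    have h4 : (h^2/2) *
        ‖∑ j ∈ Finset.range N, ((∑ i ∈ Finset.range j, (G i + G (i+1))) + G j)‖ ≤ C/12 :=
      le_trans (mul_le_mul_of_nonneg_left hSN (by positivity)) (hkey N le_rfl)
    calc T * V = ‖T • (v - u)‖ := h1.symm
      _ = ‖(h^2/2) • ∑ j ∈ Finset.range N, ((∑ i ∈ Finset.range j, (G i + G (i+1))) + G j)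
          - (x - y)‖ := by rw [hvu]
      _ ≤ C/12 + D := by linarith
      _ = D + C/12 := by ring
  have hfinal : T * V ≤ (3/2) * D := by
    rw [hC] at hTV
    linarith
  have hnorm : ‖u - v‖ = V := by rw [hV, norm_sub_rev]
  rw [hnorm]
  exact hfinal
end
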